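/- arXiv:2005.10909 — 5 statements merged into one kernel-verified Lean document; each statement's English description precedes it below -/
import Mathlib

section
/- Let 1 ≤ p < +∞. If f : [0,1) → ℂ is continuously differentiable on [0,1) and belongs to L^p([0,1]), then (∫₀¹ |f(x)|^p dx)^{1/p} ≤ p·(∫₀¹ |f'(x)|^p (1-x)^p dx)^{1/p} + |f(0)|. -/
open MeasureTheory Set
open scoped ENNReal NNReal

private lemma hardy_L1core {a b r : ℝ} (hab : a ≤ b) (hb : b ≤ 1)
    (hr : -1 < r ∨ (r ≠ -1 ∧ b < 1))
    (hint : IntervalIntegrable (fun t => (1-t)^r) volume a b) :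
    ∫⁻ t in Ioc a b, ENNReal.ofReal ((1-t)^r) =
      ENNReal.ofReal (((1-a)^(r+1) - (1-b)^(r+1))/(r+1)) := by
  rw [← ofReal_integral_eq_lintegral_ofReal]
  · congr 1
    rw [← intervalIntegral.integral_of_le hab]
    have h2 : (∫ t in a..b, (1-t)^r) = ∫ u in (1-b)..(1-a), u ^ r := by
      simpa using intervalIntegral.integral_comp_sub_left (fun u => u ^ r) 1
    have h3 : -1 < r ∨ r ≠ -1 ∧ (0:ℝ) ∉ uIcc (1-b) (1-a) := by
      rcases hr with h | ⟨h, hb1⟩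
      · exact Or.inl h
      · refine Or.inr ⟨h, ?_⟩
        rw [uIcc_of_le (by linarith)]
        intro hc
        have := hc.1
        linarith
    rw [h2, integral_rpow h3]
  · exact (intervalIntegrable_iff_integrableOn_Ioc_of_le hab).mp hint
  · filter_upwards [ae_restrict_mem measurableSet_Ioc] with t ht
    exact Real.rpow_nonneg (by linarith [ht.2]) r

private lemma hardy_L1a {a b r : ℝ} (hab : a ≤ b) (hb : b < 1) :
    IntervalIntegrable (fun t => (1-t)^r) volume a b := by
  apply ContinuousOn.intervalIntegrable
  apply ContinuousOn.rpow_const (by fun_prop)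
  intro x hx
  rw [uIcc_of_le hab] at hx
  left; intro h; have := hx.2; nlinarith [hx.2]

private lemma hardy_L1b {a r : ℝ} (hr : -1 < r) :
    IntervalIntegrable (fun t => (1-t)^r) volume a 1 := by
  have := (intervalIntegral.intervalIntegrable_rpow' hr
    (a := 1 - a) (b := 1 - 1)).comp_sub_left 1
  simpa using this

private lemma hardy_fub (e : ℝ) (H : ℝ → ℝ≥0∞)
    (hH : AEMeasurable H (volume.restrict (Ioc (0:ℝ) 1))) :
    ∫⁻ x in Ioc (0:ℝ) 1, ENNReal.ofReal ((1-x)^e) * ∫⁻ t in Ioc (0:ℝ) x, H t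
      = ∫⁻ t in Ioc (0:ℝ) 1, H t * ∫⁻ x in Ioc t 1, ENNReal.ofReal ((1-x)^e) := by
  obtain ⟨H', hH'm, hHae⟩ := hH
  set W : ℝ → ℝ≥0∞ := fun x => ENNReal.ofReal ((1-x)^e) with hW
  have hWm : Measurable W := by
    apply ENNReal.measurable_ofReal.comp
    fun_prop
  have lhs_congr : ∫⁻ x in Ioc (0:ℝ) 1, W x * ∫⁻ t in Ioc (0:ℝ) x, H t
      = ∫⁻ x in Ioc (0:ℝ) 1, W x * ∫⁻ t in Ioc (0:ℝ) x, H' t := by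
    apply setLIntegral_congr_fun measurableSet_Ioc
    intro x hx
    dsimp only
    congr 1
    exact lintegral_congr_ae
      (ae_restrict_of_ae_restrict_of_subset (Ioc_subset_Ioc_right hx.2) hHae)
  have rhs_congr : ∫⁻ t in Ioc (0:ℝ) 1, H t * ∫⁻ x in Ioc t 1, W x
      = ∫⁻ t in Ioc (0:ℝ) 1, H' t * ∫⁻ x in Ioc t 1, W x := by
    apply lintegral_congr_ae
    filter_upwards [hHae] with t ht
    rw [ht]
  rw [lhs_congr, rhs_congr]
  have key1 : ∀ x ∈ Ioc (0:ℝ) 1,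
      W x * ∫⁻ t in Ioc (0:ℝ) x, H' t
        = ∫⁻ t in Ioc (0:ℝ) 1, W x * (Iic x).indicator H' t := by
    intro x hx
    rw [lintegral_const_mul' _ _ ENNReal.ofReal_ne_top]
    congr 1
    rw [lintegral_indicator measurableSet_Iic, Measure.restrict_restrict measurableSet_Iic]
    congr 1
    rw [inter_comm, Ioc_inter_Iic, min_eq_right hx.2]
  have key2 : ∀ t ∈ Ioc (0:ℝ) 1,
      (∫⁻ x in Ioc (0:ℝ) 1, W x * (Iic x).indicator H' t)
        = H' t * ∫⁻ x in Ioc t 1, W x := by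
    intro t ht
    have : ∀ x, W x * (Iic x).indicator H' t = (Ici t).indicator W x * H' t := by
      intro x
      by_cases h : t ≤ x <;> simp [indicator_apply, h, mul_comm]
    simp_rw [this]
    rw [lintegral_mul_const _ (hWm.indicator measurableSet_Ici), mul_comm]
    congr 1
    rw [lintegral_indicator measurableSet_Ici, Measure.restrict_restrict measurableSet_Ici]
    have h1 : Ici t ∩ Ioc (0:ℝ) 1 = Icc t 1 := by
      ext y
      simp only [mem_inter_iff, mem_Ici, mem_Ioc, mem_Icc]
      constructor
      · rintro ⟨h1, _, h3⟩; exact ⟨h1, h3⟩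
      · rintro ⟨h1, h2⟩; exact ⟨h1, lt_of_lt_of_le ht.1 h1, h2⟩
    rw [h1, ← Measure.restrict_congr_set Ioc_ae_eq_Icc]
  rw [setLIntegral_congr_fun measurableSet_Ioc (fun x hx => key1 x hx),
      ← setLIntegral_congr_fun measurableSet_Ioc (fun x hx => key2 x hx)]
  apply lintegral_lintegral_swap
  have huc : (Function.uncurry fun x t => W x * (Iic x).indicator H' t)
      = fun z : ℝ×ℝ => W z.1 * ({q : ℝ×ℝ | q.2 ≤ q.1}.indicator (fun q => H' q.2) z) := by
    funext z
    simp [Function.uncurry, indicator_apply]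
  rw [huc]
  exact ((hWm.comp measurable_fst).mul ((hH'm.comp measurable_snd).indicator
    (measurableSet_le measurable_snd measurable_fst))).aemeasurable

private lemma hardy_holder_pt {p : ℝ} (hp : 1 < p) {x : ℝ} (hx : x ∈ Ioo (0:ℝ) 1)
    (N : ℝ → ℝ≥0∞) (hN : AEMeasurable N (volume.restrict (Ioc (0:ℝ) x))) :
    (∫⁻ t in Ioc (0:ℝ) x, N t) ^ p ≤
      ENNReal.ofReal (p^(p-1)) * (ENNReal.ofReal ((1-x)^(1/p-1)) *
        ∫⁻ t in Ioc (0:ℝ) x, N t ^ p * ENNReal.ofReal ((1-t)^(p-1/p))) := by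
  have hp0 : (0:ℝ) < p := lt_trans zero_lt_one hp
  have hp1 : p - 1 ≠ 0 := by linarith
  set q : ℝ := p / (p - 1) with hq
  have hpq : p.HolderConjugate q := (Real.holderConjugate_iff_eq_conjExponent hp).2 hq
  set β : ℝ := 1 - 1/p^2 with hβ
  have hβp : β * p = p - 1/p := by
    rw [hβ]; field_simp
  have hβq : (-β) * q = -((p+1)/p) := by
    rw [hβ, hq, neg_mul, neg_inj]
    field_simp
    ring
  set u : ℝ → ℝ≥0∞ := fun t => N t * ENNReal.ofReal ((1-t)^β) with hu
  set v : ℝ → ℝ≥0∞ := fun t => ENNReal.ofReal ((1-t)^(-β)) with hv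
  have hvm : Measurable v := ENNReal.measurable_ofReal.comp (by fun_prop)
  have hum : AEMeasurable u (volume.restrict (Ioc (0:ℝ) x)) :=
    hN.mul (ENNReal.measurable_ofReal.comp (by fun_prop)).aemeasurable
  have step1 : ∫⁻ t in Ioc (0:ℝ) x, N t = ∫⁻ t in Ioc (0:ℝ) x, (u * v) t := by
    apply setLIntegral_congr_fun measurableSet_Ioc
    intro t ht
    have h1t : 0 < 1 - t := by linarith [ht.2, hx.2]
    simp only [Pi.mul_apply, hu, hv]
    rw [mul_assoc, ← ENNReal.ofReal_mul (Real.rpow_nonneg h1t.le β),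
      ← Real.rpow_add h1t, add_neg_cancel, Real.rpow_zero, ENNReal.ofReal_one, mul_one]
  set X : ℝ≥0∞ := ∫⁻ t in Ioc (0:ℝ) x, N t ^ p * ENNReal.ofReal ((1-t)^(p-1/p)) with hX
  have hXeq : ∫⁻ t in Ioc (0:ℝ) x, u t ^ p = X := by
    apply setLIntegral_congr_fun measurableSet_Ioc
    intro t ht
    have h1t : 0 < 1 - t := by linarith [ht.2, hx.2]
    simp only [hu]
    rw [ENNReal.mul_rpow_of_nonneg _ _ hp0.le, ENNReal.ofReal_rpow_of_pos
      (Real.rpow_pos_of_pos h1t β), ← Real.rpow_mul h1t.le, hβp]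
  have hYeq : ∫⁻ t in Ioc (0:ℝ) x, v t ^ q =
      ∫⁻ t in Ioc (0:ℝ) x, ENNReal.ofReal ((1-t)^(-((p+1)/p))) := by
    apply setLIntegral_congr_fun measurableSet_Ioc
    intro t ht
    have h1t : 0 < 1 - t := by linarith [ht.2, hx.2]
    simp only [hv]
    rw [ENNReal.ofReal_rpow_of_pos (Real.rpow_pos_of_pos h1t _),
      ← Real.rpow_mul h1t.le, hβq]
  have hA : 0 < (1-x)^(-(1/p)) := Real.rpow_pos_of_pos (by linarith [hx.2] : (0:ℝ) < 1-x) _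
  have hYle : ∫⁻ t in Ioc (0:ℝ) x, v t ^ q ≤ ENNReal.ofReal (p * (1-x)^(-(1/p))) := by
    have hne : -((p+1)/p) ≠ -1 := by
      intro hcon
      rw [neg_inj, div_eq_one_iff_eq hp0.ne'] at hcon
      linarith
    rw [hYeq, hardy_L1core hx.1.le hx.2.le (Or.inr ⟨hne, hx.2⟩) (hardy_L1a hx.1.le hx.2)]
    apply ENNReal.ofReal_le_ofReal
    have he : -((p+1)/p) + 1 = -(1/p) := by field_simp; ring
    rw [he, sub_zero, Real.one_rpow]
    have hgoal : (1 - (1-x)^(-(1/p)))/(-(1/p)) = p * (1-x)^(-(1/p)) - p := by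
      field_simp
      ring
    rw [hgoal]
    linarith [hp0.le]
  calc (∫⁻ t in Ioc (0:ℝ) x, N t) ^ p
      = (∫⁻ t in Ioc (0:ℝ) x, (u*v) t) ^ p := by rw [step1]
    _ ≤ ((∫⁻ t in Ioc (0:ℝ) x, u t ^ p) ^ (1/p)
          * (∫⁻ t in Ioc (0:ℝ) x, v t ^ q) ^ (1/q)) ^ p :=
        ENNReal.rpow_le_rpow
          (ENNReal.lintegral_mul_le_Lp_mul_Lq _ hpq hum hvm.aemeasurable) hp0.le
    _ = X * (∫⁻ t in Ioc (0:ℝ) x, v t ^ q) ^ ((1/q)*p) := by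
        rw [ENNReal.mul_rpow_of_nonneg _ _ hp0.le, ← ENNReal.rpow_mul, ← ENNReal.rpow_mul,
          one_div_mul_cancel hp0.ne', ENNReal.rpow_one, hXeq]
    _ ≤ X * (ENNReal.ofReal (p * (1-x)^(-(1/p)))) ^ ((1/q)*p) :=
        mul_le_mul_right (ENNReal.rpow_le_rpow hYle
          (mul_nonneg (one_div_nonneg.2 hpq.symm.pos.le) hp0.le)) X
    _ = X * ENNReal.ofReal ((p * (1-x)^(-(1/p))) ^ (p-1)) := by
        have hqp : (1/q)*p = p - 1 := by rw [hq]; field_simp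
        rw [hqp, ENNReal.ofReal_rpow_of_pos (mul_pos hp0 hA)]
    _ = ENNReal.ofReal (p^(p-1)) * (ENNReal.ofReal ((1-x)^(1/p-1)) * X) := by
        rw [Real.mul_rpow hp0.le hA.le,
          ← Real.rpow_mul (by linarith [hx.2] : (0:ℝ) ≤ 1-x)]
        have hexp : -(1/p) * (p-1) = 1/p - 1 := by field_simp; ring
        rw [hexp, ENNReal.ofReal_mul (Real.rpow_nonneg hp0.le _)]
        ring

private lemma hardy_ftc (f : ℝ → ℂ) (hC1 : ContDiffOn ℝ 1 f (Ico (0:ℝ) 1))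
    {x : ℝ} (hx : x ∈ Ioo (0:ℝ) 1) :
    ENNReal.ofReal ‖f x - f 0‖ ≤
      ∫⁻ t in Ioc (0:ℝ) x, ENNReal.ofReal ‖derivWithin f (Ico (0:ℝ) 1) t‖ := by
  set g := derivWithin f (Ico (0:ℝ) 1) with hg
  have hgc : ContinuousOn g (Ico 0 1) :=
    hC1.continuousOn_derivWithin (uniqueDiffOn_Ico 0 1) le_rfl
  have hsub : Icc (0:ℝ) x ⊆ Ico 0 1 := fun t ht => ⟨ht.1, lt_of_le_of_lt ht.2 hx.2⟩
  have hcont : ContinuousOn f (Icc 0 x) := hC1.continuousOn.mono hsub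
  have hderiv : ∀ t ∈ Ioo (0:ℝ) x, HasDerivWithinAt f (g t) (Ioi t) t := by
    intro t ht
    have htm : t ∈ Ico (0:ℝ) 1 := ⟨ht.1.le, ht.2.trans hx.2⟩
    have hd : DifferentiableWithinAt ℝ f (Ico (0:ℝ) 1) t :=
      (hC1.differentiableOn one_ne_zero) t htm
    have hnb : Ico (0:ℝ) 1 ∈ nhds t := Ico_mem_nhds ht.1 (ht.2.trans hx.2)
    exact ((hd.hasDerivWithinAt).hasDerivAt hnb).hasDerivWithinAt
  have hint : IntervalIntegrable g volume 0 x := by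
    apply ContinuousOn.intervalIntegrable
    rw [uIcc_of_le hx.1.le]
    exact hgc.mono hsub
  have heq : ∫ t in (0:ℝ)..x, g t = f x - f 0 :=
    intervalIntegral.integral_eq_sub_of_hasDeriv_right_of_le hx.1.le hcont hderiv hint
  rw [← heq, intervalIntegral.integral_of_le hx.1.le]
  simp_rw [ofReal_norm]
  exact enorm_integral_le_lintegral_enorm _

/-- Let `1 ≤ p < ∞`. If `f : [0,1) → ℂ` is `C¹` on `[0,1)` and belongs to
`L^p([0,1])`, then `(∫₀¹ |f|^p)^{1/p} ≤ p (∫₀¹ |f'(x)|^p (1-x)^p dx)^{1/p} + |f 0|`. -/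
theorem stmt0 (p : ℝ) (hp : 1 ≤ p) (f : ℝ → ℂ)
    (hC1 : ContDiffOn ℝ 1 f (Ico (0:ℝ) 1))
    (hLp : MemLp f (ENNReal.ofReal p) (volume.restrict (Ioc (0:ℝ) 1))) :
    (∫⁻ x in Ioc (0:ℝ) 1, ENNReal.ofReal (‖f x‖ ^ p)) ^ (1/p) ≤
      ENNReal.ofReal p *
        (∫⁻ x in Ioc (0:ℝ) 1,
            ENNReal.ofReal (‖derivWithin f (Ico (0:ℝ) 1) x‖ ^ p * (1-x) ^ p)) ^ (1/p)
      + ENNReal.ofReal ‖f 0‖ := by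
  have hp0 : (0:ℝ) < p := lt_of_lt_of_le zero_lt_one hp
  set g := derivWithin f (Ico (0:ℝ) 1) with hgdef
  set N : ℝ → ℝ≥0∞ := fun t => ENNReal.ofReal ‖g t‖ with hNdef
  set c := f 0 with hc
  have hL : ∀ x:ℝ, ENNReal.ofReal (‖f x‖ ^ p) = ENNReal.ofReal ‖f x‖ ^ p :=
    fun x => (ENNReal.ofReal_rpow_of_nonneg (norm_nonneg _) hp0.le).symm
  have hR : ∀ x:ℝ, ENNReal.ofReal (‖g x‖ ^ p * (1-x)^p)
      = N x ^ p * ENNReal.ofReal ((1-x)^p) := by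
    intro x
    rw [ENNReal.ofReal_mul (Real.rpow_nonneg (norm_nonneg _) _),
      ENNReal.ofReal_rpow_of_nonneg (norm_nonneg _) hp0.le]
  simp_rw [hL, hR]
  have hrestr : volume.restrict (Ioc (0:ℝ) 1) = volume.restrict (Ioo (0:ℝ) 1) :=
    (Measure.restrict_congr_set Ioo_ae_eq_Ioc).symm
  -- measurability
  have hfm : AEMeasurable f (volume.restrict (Ioc (0:ℝ) 1)) :=
    hLp.aestronglyMeasurable.aemeasurable
  have hf1 : AEMeasurable (fun x => ENNReal.ofReal ‖f x - c‖)
      (volume.restrict (Ioc (0:ℝ) 1)) :=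
    ENNReal.measurable_ofReal.comp_aemeasurable (hfm.sub aemeasurable_const).norm
  have hNae : AEMeasurable N (volume.restrict (Ioc (0:ℝ) 1)) := by
    rw [hrestr]
    have hgc : ContinuousOn g (Ico 0 1) :=
      hC1.continuousOn_derivWithin (uniqueDiffOn_Ico 0 1) le_rfl
    exact ENNReal.measurable_ofReal.comp_aemeasurable
      ((hgc.mono Ioo_subset_Ico_self).aemeasurable measurableSet_Ioo).norm
  -- the unified pointwise bound
  have hpt : ∀ x ∈ Ioo (0:ℝ) 1, ENNReal.ofReal ‖f x - c‖ ^ p ≤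
      ENNReal.ofReal (p^(p-1)) * (ENNReal.ofReal ((1-x)^(1/p-1)) *
        ∫⁻ t in Ioc (0:ℝ) x, N t ^ p * ENNReal.ofReal ((1-t)^(p-1/p))) := by
    intro x hx
    have h0 := hardy_ftc f hC1 hx
    have h1 : ENNReal.ofReal ‖f x - c‖ ^ p ≤ (∫⁻ t in Ioc (0:ℝ) x, N t) ^ p :=
      ENNReal.rpow_le_rpow h0 hp0.le
    rcases eq_or_lt_of_le hp with hp1 | hp1
    · refine h1.trans (le_of_eq ?_)
      rw [← hp1]
      norm_num [Real.rpow_zero, Real.one_rpow, ENNReal.rpow_one]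
    · refine h1.trans ?_
      exact hardy_holder_pt hp1 hx N
        (hNae.mono_measure (Measure.restrict_mono (Ioc_subset_Ioc_right hx.2.le) le_rfl))
  -- measurability of the weighted integrand
  have hH : AEMeasurable (fun t => N t ^ p * ENNReal.ofReal ((1-t)^(p-1/p)))
      (volume.restrict (Ioc (0:ℝ) 1)) :=
    (hNae.pow_const p).mul
      (ENNReal.measurable_ofReal.comp (by fun_prop : Measurable
        (fun t : ℝ => (1-t)^(p-1/p)))).aemeasurable
  -- key: the Hardy bound for the integral of ‖f - c‖^p
  have key : ∫⁻ x in Ioc (0:ℝ) 1, ENNReal.ofReal ‖f x - c‖ ^ p ≤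
      ENNReal.ofReal (p^p) * ∫⁻ x in Ioc (0:ℝ) 1, N x ^ p * ENNReal.ofReal ((1-x)^p) := by
    have step1 : ∫⁻ x in Ioc (0:ℝ) 1, ENNReal.ofReal ‖f x - c‖ ^ p ≤
        ∫⁻ x in Ioc (0:ℝ) 1, ENNReal.ofReal (p^(p-1)) * (ENNReal.ofReal ((1-x)^(1/p-1)) *
          ∫⁻ t in Ioc (0:ℝ) x, N t ^ p * ENNReal.ofReal ((1-t)^(p-1/p))) := by
      rw [hrestr]
      apply lintegral_mono_ae
      filter_upwards [ae_restrict_mem measurableSet_Ioo] with x hx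
      exact hpt x hx
    refine step1.trans ?_
    rw [lintegral_const_mul' _ _ ENNReal.ofReal_ne_top, hardy_fub (1/p-1) _ hH]
    have inner_eq : ∫⁻ t in Ioc (0:ℝ) 1,
        (N t ^ p * ENNReal.ofReal ((1-t)^(p-1/p))) *
          (∫⁻ x in Ioc t 1, ENNReal.ofReal ((1-x)^(1/p-1)))
        = ∫⁻ t in Ioc (0:ℝ) 1,
            ENNReal.ofReal p * (N t ^ p * ENNReal.ofReal ((1-t)^p)) := by
      rw [hrestr]
      apply setLIntegral_congr_fun measurableSet_Ioo
      intro t ht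
      have h1t : 0 < 1 - t := by linarith [ht.2]
      have hC : ∫⁻ x in Ioc t 1, ENNReal.ofReal ((1-x)^(1/p-1))
          = ENNReal.ofReal (p * (1-t)^(1/p)) := by
        have he : -1 < 1/p - 1 := by
          have : 0 < 1/p := by positivity
          linarith
        rw [hardy_L1core ht.2.le le_rfl (Or.inl he) (hardy_L1b he)]
        congr 1
        rw [sub_self (1:ℝ)]
        have h10 : (1:ℝ)/p - 1 + 1 = 1/p := by ring
        rw [h10, Real.zero_rpow (by positivity : (1:ℝ)/p ≠ 0), sub_zero]
        rw [one_div, div_eq_mul_inv, inv_inv, mul_comm]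
      dsimp only
      rw [hC, ENNReal.ofReal_mul hp0.le]
      have hw : ENNReal.ofReal ((1-t)^(p-1/p)) * ENNReal.ofReal ((1-t)^(1/p))
          = ENNReal.ofReal ((1-t)^p) := by
        rw [← ENNReal.ofReal_mul (Real.rpow_nonneg h1t.le _), ← Real.rpow_add h1t]
        norm_num
      calc N t ^ p * ENNReal.ofReal ((1-t)^(p-1/p)) *
            (ENNReal.ofReal p * ENNReal.ofReal ((1-t)^(1/p)))
          = ENNReal.ofReal p * (N t ^ p *
              (ENNReal.ofReal ((1-t)^(p-1/p)) * ENNReal.ofReal ((1-t)^(1/p)))) := by ring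
        _ = ENNReal.ofReal p * (N t ^ p * ENNReal.ofReal ((1-t)^p)) := by rw [hw]
    rw [inner_eq, lintegral_const_mul' _ _ ENNReal.ofReal_ne_top, ← mul_assoc]
    apply mul_le_mul_left
    rw [← ENNReal.ofReal_mul (Real.rpow_nonneg hp0.le _)]
    apply le_of_eq
    congr 1
    have h := (Real.rpow_add hp0 (p-1) 1).symm
    rw [Real.rpow_one] at h
    rw [h]
    congr 1
    ring
  -- triangle inequality and conclusion
  set F1 : ℝ → ℝ≥0∞ := fun x => ENNReal.ofReal ‖f x - c‖ with hF1
  set F2 : ℝ → ℝ≥0∞ := fun _ => ENNReal.ofReal ‖c‖ with hF2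
  have tri : ∀ x, ENNReal.ofReal ‖f x‖ ^ p ≤ (F1 + F2) x ^ p := by
    intro x
    apply ENNReal.rpow_le_rpow _ hp0.le
    simp only [Pi.add_apply, hF1, hF2]
    rw [← ENNReal.ofReal_add (norm_nonneg _) (norm_nonneg _)]
    apply ENNReal.ofReal_le_ofReal
    simpa using norm_add_le (f x - c) c
  have hvol : (volume.restrict (Ioc (0:ℝ) 1)) univ = 1 := by
    rw [Measure.restrict_apply_univ, Real.volume_Ioc]
    norm_num
  calc (∫⁻ x in Ioc (0:ℝ) 1, ENNReal.ofReal ‖f x‖ ^ p) ^ (1/p)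
      ≤ (∫⁻ x in Ioc (0:ℝ) 1, (F1 + F2) x ^ p) ^ (1/p) :=
        ENNReal.rpow_le_rpow (lintegral_mono tri) (by positivity)
    _ ≤ (∫⁻ x in Ioc (0:ℝ) 1, F1 x ^ p) ^ (1/p)
          + (∫⁻ x in Ioc (0:ℝ) 1, F2 x ^ p) ^ (1/p) :=
        ENNReal.lintegral_Lp_add_le hf1 aemeasurable_const hp
    _ ≤ ENNReal.ofReal p *
          (∫⁻ x in Ioc (0:ℝ) 1, N x ^ p * ENNReal.ofReal ((1-x)^p)) ^ (1/p)
          + ENNReal.ofReal ‖c‖ := by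
        apply add_le_add
        · calc (∫⁻ x in Ioc (0:ℝ) 1, F1 x ^ p) ^ (1/p)
              ≤ (ENNReal.ofReal (p^p) *
                  ∫⁻ x in Ioc (0:ℝ) 1, N x ^ p * ENNReal.ofReal ((1-x)^p)) ^ (1/p) :=
                ENNReal.rpow_le_rpow key (by positivity)
            _ = ENNReal.ofReal p *
                  (∫⁻ x in Ioc (0:ℝ) 1, N x ^ p * ENNReal.ofReal ((1-x)^p)) ^ (1/p) := by
                rw [ENNReal.mul_rpow_of_nonneg _ _ (by positivity : (0:ℝ) ≤ 1/p)]
                congr 1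
                rw [ENNReal.ofReal_rpow_of_pos (Real.rpow_pos_of_pos hp0 p),
                  ← Real.rpow_mul hp0.le, mul_one_div_cancel hp0.ne', Real.rpow_one]
        · apply le_of_eq
          simp only [hF2]
          rw [lintegral_const, hvol, mul_one, ← ENNReal.rpow_mul,
            mul_one_div_cancel hp0.ne', ENNReal.rpow_one]
end

section
/- Let 1 ≤ p < +∞ and 1 ≤ q ≤ +∞. For every analytic function f on the unit disc 𝔻 one has ρ_{p,q}(f) ≤ p·ρ_{p,q}((1-|z|)·f'(z)) + |f(0)|, where ρ_{p,q} is also applied to the (measurable) function z ↦ (1-|z|)f'(z). -/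
open MeasureTheory Metric Filter
open scoped ENNReal NNReal

/-- The point `r e^{iθ}` of the complex plane. -/
noncomputable def circ (r θ : ℝ) : ℂ := r * Complex.exp (θ * Complex.I)

/-- The average radial integrability (quasi-)norm `ρ_{p,q}`, for `1 ≤ p < ∞` and
`1 ≤ q ≤ ∞` (the case `q = ∞` being the essential/pointwise supremum in `θ`),
taking values in `ℝ≥0∞`. -/
noncomputable def rho (p : ℝ) (q : ℝ≥0∞) (h : ℂ → ℂ) : ℝ≥0∞ :=
  if q = ⊤ then
    ⨆ θ : ℝ, (∫⁻ r in Set.Ioc (0:ℝ) 1, ENNReal.ofReal (‖h (circ r θ)‖ ^ p)) ^ (1/p)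
  else
    (ENNReal.ofReal (1/(2*Real.pi)) *
      ∫⁻ θ in Set.Ioc (0:ℝ) (2*Real.pi),
        (∫⁻ r in Set.Ioc (0:ℝ) 1, ENNReal.ofReal (‖h (circ r θ)‖ ^ p)) ^ (q.toReal/p)) ^ (1/q.toReal)

open Set

lemma measurable_indicator_of_continuousOn {g : ℂ → ℂ} {s : Set ℂ} (hs : IsOpen s)
    (hg : ContinuousOn g s) : Measurable (s.indicator g) := by
  apply measurable_of_isOpen
  intro U hU
  have : s.indicator g ⁻¹' U =
      (s ∩ g ⁻¹' U) ∪ (sᶜ ∩ (fun _ : ℂ => (0:ℂ)) ⁻¹' U) := by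
    ext x
    by_cases hx : x ∈ s <;> simp [Set.indicator_of_mem, Set.indicator_of_notMem, hx]
  rw [this]
  exact ((hg.isOpen_inter_preimage hs hU).measurableSet).union
    (hs.measurableSet.compl.inter (measurable_const hU.measurableSet))

lemma swap_lemma (φ ψ : ℝ → ℝ≥0∞) (hφ : Measurable φ) (hψ : Measurable ψ) :
    ∫⁻ r in Set.Ioo (0:ℝ) 1, ψ r * ∫⁻ t in Set.Ioc 0 r, φ t
      = ∫⁻ t in Set.Ioo (0:ℝ) 1, φ t * ∫⁻ r in Set.Ico t 1, ψ r := by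
  set F : ℝ × ℝ → ℝ≥0∞ :=
    Set.indicator {x : ℝ × ℝ | 0 < x.2 ∧ x.2 ≤ x.1} (fun x => ψ x.1 * φ x.2) with hF
  have hSmeas : MeasurableSet {x : ℝ × ℝ | 0 < x.2 ∧ x.2 ≤ x.1} :=
    (measurableSet_lt measurable_const measurable_snd).inter
      (measurableSet_le measurable_snd measurable_fst)
  have hFmeas : Measurable F :=
    ((hψ.comp measurable_fst).mul (hφ.comp measurable_snd)).indicator hSmeas
  have step1 : ∀ r : ℝ, ψ r * ∫⁻ t in Set.Ioc 0 r, φ t = ∫⁻ t, F (r, t) := by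
    intro r
    rw [← lintegral_indicator measurableSet_Ioc,
      ← lintegral_const_mul _ (hφ.indicator measurableSet_Ioc)]
    congr 1
    funext t
    by_cases ht : t ∈ Set.Ioc 0 r
    · rw [Set.indicator_of_mem ht, hF, Set.indicator_of_mem]
      exact ⟨ht.1, ht.2⟩
    · rw [Set.indicator_of_notMem ht, mul_zero, hF, Set.indicator_of_notMem]
      exact fun h => ht ⟨h.1, h.2⟩
  calc ∫⁻ r in Set.Ioo (0:ℝ) 1, ψ r * ∫⁻ t in Set.Ioc 0 r, φ t
      = ∫⁻ r in Set.Ioo (0:ℝ) 1, ∫⁻ t, F (r, t) := by simp_rw [step1]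
    _ = ∫⁻ t, ∫⁻ r in Set.Ioo (0:ℝ) 1, F (r, t) :=
        lintegral_lintegral_swap hFmeas.aemeasurable
    _ = ∫⁻ t, Set.indicator (Set.Ioo (0:ℝ) 1)
          (fun t => φ t * ∫⁻ r in Set.Ico t 1, ψ r) t := by
        apply lintegral_congr
        intro t
        by_cases ht : t ∈ Set.Ioo (0:ℝ) 1
        · rw [Set.indicator_of_mem ht]
          have hpt : ∀ r, F (r, t) = Set.indicator (Set.Ici t) (fun r => ψ r * φ t) r := by
            intro r
            by_cases hr : t ≤ r
            · rw [hF, Set.indicator_of_mem (by exact ⟨ht.1, hr⟩),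
                Set.indicator_of_mem (by exact hr)]
            · rw [hF, Set.indicator_of_notMem (fun h => hr h.2)]
              exact (Set.indicator_of_notMem (fun h => hr h) _).symm
          simp_rw [hpt]
          rw [lintegral_indicator measurableSet_Ici, Measure.restrict_restrict measurableSet_Ici]
          have hset : Set.Ici t ∩ Set.Ioo (0:ℝ) 1 = Set.Ico t 1 := by
            ext x
            constructor
            · rintro ⟨h1, h2, h3⟩; exact ⟨h1, h3⟩
            · rintro ⟨h1, h2⟩; exact ⟨h1, lt_of_lt_of_le ht.1 h1, h2⟩
          rw [hset, lintegral_mul_const _ hψ, mul_comm]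
        · rw [Set.indicator_of_notMem ht]
          have h0 : ∀ r ∈ Set.Ioo (0:ℝ) 1, F (r, t) = 0 := by
            intro r hr
            rw [hF, Set.indicator_of_notMem]
            rintro ⟨h1, h2⟩
            exact ht ⟨h1, lt_of_le_of_lt h2 hr.2⟩
          rw [setLIntegral_congr_fun measurableSet_Ioo h0, lintegral_zero]
    _ = ∫⁻ t in Set.Ioo (0:ℝ) 1, φ t * ∫⁻ r in Set.Ico t 1, ψ r :=
        lintegral_indicator measurableSet_Ioo _

lemma lint_H2 {p r : ℝ} (hp : 1 < p) (hr : r ∈ Set.Ioo (0:ℝ) 1) :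
    ∫⁻ t in Set.Ioc 0 r, ENNReal.ofReal ((1 - t) ^ (-(1 + 1/p)))
      ≤ ENNReal.ofReal (p * (1 - r) ^ (-(1/p))) := by
  have hp0 : (0:ℝ) < p := lt_trans one_pos hp
  have h1r : (0:ℝ) < 1 - r := by linarith [hr.2]
  have hcont : ContinuousOn (fun t : ℝ => (1 - t) ^ (-(1 + 1/p))) (Set.Icc 0 r) := by
    apply ContinuousOn.rpow_const (by fun_prop)
    intro t ht
    left
    have : t ≤ r := ht.2
    intro h
    nlinarith [hr.2]
  have hInt : IntegrableOn (fun t : ℝ => (1 - t) ^ (-(1 + 1/p))) (Set.Ioc 0 r) :=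
    (hcont.integrableOn_Icc).mono_set Set.Ioc_subset_Icc_self
  rw [← ofReal_integral_eq_lintegral_ofReal hInt]
  · apply ENNReal.ofReal_le_ofReal
    rw [← intervalIntegral.integral_of_le hr.1.le]
    have hcomp : (∫ t in (0:ℝ)..r, (1 - t) ^ (-(1 + 1/p)))
        = ∫ x in (1 - r)..(1 - 0), x ^ (-(1 + 1/p)) :=
      intervalIntegral.integral_comp_sub_left (fun x : ℝ => x ^ (-(1 + 1/p))) 1
    rw [hcomp]
    rw [integral_rpow (Or.inr ⟨by
        intro h
        have : (1:ℝ)/p = 0 := by linarith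
        simp [ne_of_gt hp0] at this
        , by
        rw [Set.uIcc_of_le (by linarith [hr.1])]
        rintro ⟨h1, h2⟩
        linarith⟩)]
    have he : -(1 + 1/p) + 1 = -(1/p) := by ring
    rw [he]
    rw [sub_zero, Real.one_rpow]
    have hpow : (1:ℝ) ≤ (1 - r) ^ (-(1/p)) :=
      Real.one_le_rpow_of_pos_of_le_one_of_nonpos h1r (by linarith [hr.1])
        (neg_nonpos.mpr (by positivity))
    rw [div_le_iff_of_neg (neg_lt_zero.mpr (by positivity : (0:ℝ) < 1/p))]
    have hpp : p * (1/p) = 1 := mul_one_div_cancel (ne_of_gt hp0)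
    nlinarith [Real.rpow_pos_of_pos h1r (-(1/p))]
  · filter_upwards [ae_restrict_mem measurableSet_Ioc] with t ht
    exact Real.rpow_nonneg (by linarith [ht.2, hr.2]) _

lemma lint_H5 {p t : ℝ} (hp : 1 < p) (ht : t ∈ Set.Ioo (0:ℝ) 1) :
    ∫⁻ r in Set.Ico t 1, ENNReal.ofReal ((1 - r) ^ (-((p-1)/p)))
      = ENNReal.ofReal (p * (1 - t) ^ (1/p)) := by
  have hp0 : (0:ℝ) < p := lt_trans one_pos hp
  have h1t : (0:ℝ) < 1 - t := by linarith [ht.2]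
  have hd : (-1:ℝ) < -((p-1)/p) := by
    rw [neg_lt_neg_iff, div_lt_one hp0]
    linarith
  have hII : IntervalIntegrable (fun r : ℝ => (1 - r) ^ (-((p-1)/p))) volume t 1 := by
    have := (intervalIntegral.intervalIntegrable_rpow' (a := 1 - 1) (b := 1 - t) hd)
    simpa using (this.comp_sub_left 1).symm
  rw [Measure.restrict_congr_set Ico_ae_eq_Ioc,
    ← ofReal_integral_eq_lintegral_ofReal (hII.1) (by
      filter_upwards [ae_restrict_mem measurableSet_Ioc] with r hr
      exact Real.rpow_nonneg (by linarith [hr.2]) _)]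
  congr 1
  rw [← intervalIntegral.integral_of_le ht.2.le]
  have hcomp : (∫ r in t..(1:ℝ), (1 - r) ^ (-((p-1)/p)))
      = ∫ x in (1-(1:ℝ))..(1 - t), x ^ (-((p-1)/p)) :=
    intervalIntegral.integral_comp_sub_left (fun x : ℝ => x ^ (-((p-1)/p))) 1
  rw [hcomp, sub_self, integral_rpow (Or.inl hd)]
  have he : -((p-1)/p) + 1 = 1/p := by field_simp; ring
  rw [he, Real.zero_rpow (by positivity), sub_zero, div_eq_iff (by positivity : (1:ℝ)/p ≠ 0)]
  field_simp

lemma hardy {p : ℝ} (hp : 1 ≤ p) {H : ℝ → ℝ≥0∞} (hH : Measurable H) :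
    ∫⁻ r in Set.Ioo (0:ℝ) 1, (∫⁻ t in Set.Ioc 0 r, H t) ^ p
      ≤ ENNReal.ofReal p ^ p * ∫⁻ t in Set.Ioo (0:ℝ) 1, (ENNReal.ofReal (1 - t) * H t) ^ p := by
  have hw : Measurable (fun t : ℝ => ENNReal.ofReal (1 - t)) :=
    ENNReal.measurable_ofReal.comp (measurable_const.sub measurable_id)
  rcases eq_or_lt_of_le hp with hp1 | hp1
  · -- p = 1
    subst hp1
    simp only [ENNReal.rpow_one, ENNReal.ofReal_one, ENNReal.one_rpow, one_mul]
    have hsw := swap_lemma H (fun _ => 1) hH measurable_const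
    simp only [one_mul] at hsw
    rw [hsw]
    apply le_of_eq
    apply setLIntegral_congr_fun measurableSet_Ioo
    intro t ht
    beta_reduce
    rw [setLIntegral_one, Real.volume_Ico, mul_comm]
  · -- 1 < p
    have hp0 : (0:ℝ) < p := lt_trans one_pos hp1
    have hpm1 : (0:ℝ) < p - 1 := sub_pos.mpr hp1
    set a : ℝ := 1 - 1/p^2 with ha
    set p' : ℝ := p/(p-1) with hp'
    have hpq : p.HolderConjugate p' := (Real.holderConjugate_iff_eq_conjExponent hp1).mpr rfl
    have hp'0 : (0:ℝ) < p' := by positivity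
    have hne1 : p ≠ 0 := hp0.ne'
    have hne2 : p - 1 ≠ 0 := hpm1.ne'
    have e1 : (-a) * p' = -(1 + 1/p) := by rw [ha, hp']; field_simp; ring
    have e3 : a * p + 1/p = p := by rw [ha]; field_simp; ring
    set w : ℝ → ℝ≥0∞ := fun t => ENNReal.ofReal (1 - t) with hwdef
    set u : ℝ → ℝ≥0∞ := fun t => w t ^ a * H t with hu
    set v : ℝ → ℝ≥0∞ := fun t => w t ^ (-a) with hv
    set φ : ℝ → ℝ≥0∞ := fun t => u t ^ p with hφ
    set ψ : ℝ → ℝ≥0∞ := fun r => w r ^ (-((p-1)/p)) with hψ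
    have hrpow : ∀ c : ℝ, Measurable (fun x : ℝ≥0∞ => x ^ c) :=
      fun c => ENNReal.continuous_rpow_const.measurable
    have hum : Measurable u := ((hrpow a).comp hw).mul hH
    have hvm : Measurable v := (hrpow (-a)).comp hw
    have hφm : Measurable φ := (hrpow p).comp hum
    have hψm : Measurable ψ := (hrpow _).comp hw
    -- pointwise bound for r in Ioo 0 1
    have key : ∀ r ∈ Set.Ioo (0:ℝ) 1,
        (∫⁻ t in Set.Ioc 0 r, H t) ^ p
          ≤ ENNReal.ofReal (p ^ (p-1)) * (ψ r * ∫⁻ t in Set.Ioc 0 r, φ t) := by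
      intro r hr
      have h1r : (0:ℝ) < 1 - r := by linarith [hr.2]
      have hwpos : ∀ t ∈ Set.Ioc (0:ℝ) r, w t ≠ 0 ∧ w t ≠ ⊤ := by
        intro t htt
        refine ⟨?_, ENNReal.ofReal_ne_top⟩
        simp only [hwdef, ne_eq, ENNReal.ofReal_eq_zero, not_le]
        linarith [htt.2]
      have hsplit : ∫⁻ t in Set.Ioc 0 r, H t = ∫⁻ t in Set.Ioc 0 r, u t * v t := by
        apply setLIntegral_congr_fun measurableSet_Ioc
        intro t htt
        obtain ⟨hw0, hwt⟩ := hwpos t htt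
        rw [hu, hv]
        simp only
        rw [mul_right_comm, ← ENNReal.rpow_add _ _ hw0 hwt, add_neg_cancel,
          ENNReal.rpow_zero, one_mul]
      have hHolder := ENNReal.lintegral_mul_le_Lp_mul_Lq
        (volume.restrict (Set.Ioc 0 r)) hpq hum.aemeasurable hvm.aemeasurable
      have hv2 : ∫⁻ t in Set.Ioc 0 r, v t ^ p' ≤ ENNReal.ofReal (p * (1 - r) ^ (-(1/p))) := by
        have : ∫⁻ t in Set.Ioc 0 r, v t ^ p'
            = ∫⁻ t in Set.Ioc 0 r, ENNReal.ofReal ((1 - t) ^ (-(1 + 1/p))) := by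
          apply setLIntegral_congr_fun measurableSet_Ioc
          intro t htt
          have h1t : (0:ℝ) < 1 - t := by linarith [htt.2, hr.2]
          rw [hv]
          simp only
          rw [← ENNReal.rpow_mul, e1, hwdef]
          exact ENNReal.ofReal_rpow_of_pos h1t
        rw [this]
        exact lint_H2 hp1 hr
      calc (∫⁻ t in Set.Ioc 0 r, H t) ^ p
          ≤ ((∫⁻ t in Set.Ioc 0 r, u t ^ p) ^ (1/p)
              * (ENNReal.ofReal (p * (1 - r) ^ (-(1/p)))) ^ (1/p')) ^ p := by
            apply ENNReal.rpow_le_rpow _ hp0.le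
            rw [hsplit]
            exact le_trans hHolder (mul_le_mul_right
              (ENNReal.rpow_le_rpow hv2 (by positivity)) _)
        _ = (∫⁻ t in Set.Ioc 0 r, φ t)
              * (ENNReal.ofReal (p * (1 - r) ^ (-(1/p)))) ^ (p/p') := by
            rw [ENNReal.mul_rpow_of_nonneg _ _ hp0.le, ← ENNReal.rpow_mul,
              ← ENNReal.rpow_mul, one_div_mul_cancel hp0.ne', ENNReal.rpow_one,
              one_div_mul_eq_div, hφ]
        _ = ENNReal.ofReal (p ^ (p-1)) * (ψ r * ∫⁻ t in Set.Ioc 0 r, φ t) := by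
            have hΔ : p / p' = p - 1 := by rw [hp']; field_simp
            have hexp : ((1 - r) ^ (-(1/p))) ^ (p-1) = (1 - r) ^ (-((p-1)/p)) := by
              rw [← Real.rpow_mul h1r.le]
              congr 1
              field_simp
            rw [hΔ, ENNReal.ofReal_rpow_of_pos (by positivity),
              Real.mul_rpow hp0.le (Real.rpow_nonneg h1r.le _), hexp,
              ENNReal.ofReal_mul (by positivity), hψ, hwdef]
            simp only
            rw [ENNReal.ofReal_rpow_of_pos h1r]
            ring
    -- Step B : integrate the pointwise bound, swap and compute
    calc ∫⁻ r in Set.Ioo (0:ℝ) 1, (∫⁻ t in Set.Ioc 0 r, H t) ^ p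
        ≤ ∫⁻ r in Set.Ioo (0:ℝ) 1,
            ENNReal.ofReal (p ^ (p-1)) * (ψ r * ∫⁻ t in Set.Ioc 0 r, φ t) := by
          apply lintegral_mono_ae
          filter_upwards [ae_restrict_mem measurableSet_Ioo] with r hr using key r hr
      _ = ENNReal.ofReal (p ^ (p-1))
            * ∫⁻ r in Set.Ioo (0:ℝ) 1, ψ r * ∫⁻ t in Set.Ioc 0 r, φ t :=
          lintegral_const_mul' _ _ ENNReal.ofReal_ne_top
      _ = ENNReal.ofReal (p ^ (p-1))
            * ∫⁻ t in Set.Ioo (0:ℝ) 1, φ t * ∫⁻ r in Set.Ico t 1, ψ r := by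
          rw [swap_lemma φ ψ hφm hψm]
      _ = ENNReal.ofReal (p ^ (p-1))
            * ∫⁻ t in Set.Ioo (0:ℝ) 1,
                ENNReal.ofReal p * (ENNReal.ofReal (1 - t) * H t) ^ p := by
          congr 1
          apply setLIntegral_congr_fun measurableSet_Ioo
          intro t ht
          have h1t : (0:ℝ) < 1 - t := by linarith [ht.2]
          have hwne : w t ≠ 0 := by
            simp only [hwdef, ne_eq, ENNReal.ofReal_eq_zero, not_le]; linarith
          have hIco : ∫⁻ r in Set.Ico t 1, ψ r
              = ENNReal.ofReal (p * (1 - t) ^ (1/p)) := by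
            have : ∀ r ∈ Set.Ico t (1:ℝ), ψ r = ENNReal.ofReal ((1 - r) ^ (-((p-1)/p))) := by
              intro r hrr
              rw [hψ]
              simp only
              rw [hwdef]
              exact ENNReal.ofReal_rpow_of_pos (by linarith [hrr.2])
            rw [setLIntegral_congr_fun measurableSet_Ico this]
            exact lint_H5 hp1 ht
          beta_reduce
          rw [hIco, hφ, hu]
          simp only
          rw [ENNReal.mul_rpow_of_nonneg _ _ hp0.le, ← ENNReal.rpow_mul,
            ENNReal.mul_rpow_of_nonneg _ _ hp0.le,
            ENNReal.ofReal_mul hp0.le, ENNReal.ofReal_rpow_of_pos h1t]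
          rw [show ENNReal.ofReal ((1-t) ^ (1/p)) = w t ^ (1/p) by
            rw [hwdef]; exact (ENNReal.ofReal_rpow_of_pos h1t).symm]
          rw [show ENNReal.ofReal ((1-t) ^ (a*p)) = w t ^ (a*p) by
            rw [hwdef]; exact (ENNReal.ofReal_rpow_of_pos h1t).symm]
          rw [show (ENNReal.ofReal (1-t) : ℝ≥0∞) = w t from rfl]
          rw [show w t ^ p = w t ^ (a*p) * w t ^ (1/p) by
            rw [← ENNReal.rpow_add _ _ hwne ENNReal.ofReal_ne_top, e3]]
          ring
      _ = ENNReal.ofReal p ^ p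
            * ∫⁻ t in Set.Ioo (0:ℝ) 1, (ENNReal.ofReal (1 - t) * H t) ^ p := by
          rw [lintegral_const_mul' _ _ ENNReal.ofReal_ne_top, ← mul_assoc,
            ← ENNReal.ofReal_mul (by positivity),
            ENNReal.ofReal_rpow_of_pos hp0]
          congr 2
          rw [← Real.rpow_add_one hne1 (p-1)]
          ring_nf

lemma circ_abs {r θ : ℝ} (hr : 0 ≤ r) : ‖circ r θ‖ = r := by
  rw [circ, norm_mul, Complex.norm_exp_ofReal_mul_I, Complex.norm_real, mul_one, Real.norm_of_nonneg hr]

lemma circ_mem_ball {r θ : ℝ} (hr : 0 ≤ r) (hr1 : r < 1) : circ r θ ∈ ball (0:ℂ) 1 := by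
  rw [mem_ball_zero_iff, circ_abs hr]
  exact hr1

lemma circ_zero (θ : ℝ) : circ 0 θ = 0 := by simp [circ]

lemma circ_continuous (θ : ℝ) : Continuous fun t : ℝ => circ t θ :=
  (Complex.continuous_ofReal).mul continuous_const

lemma radial {p : ℝ} (hp : 1 ≤ p) {f : ℂ → ℂ}
    (hf : DifferentiableOn ℂ f (ball (0:ℂ) 1)) (θ : ℝ) :
    (∫⁻ r in Set.Ioc (0:ℝ) 1, ENNReal.ofReal (‖f (circ r θ)‖ ^ p)) ^ (1/p)
      ≤ ENNReal.ofReal ‖f 0‖ + ENNReal.ofReal p *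
        (∫⁻ r in Set.Ioc (0:ℝ) 1,
          ENNReal.ofReal (‖((1 - ‖circ r θ‖ : ℝ) : ℂ) * deriv f (circ r θ)‖ ^ p)) ^ (1/p) := by
  have hp0 : (0:ℝ) < p := lt_of_lt_of_le one_pos hp
  have hdc : ContinuousOn (deriv f) (ball (0:ℂ) 1) :=
    ((hf.analyticOnNhd isOpen_ball).deriv).continuousOn
  set D : ℂ → ℂ := (ball (0:ℂ) 1).indicator (deriv f) with hD
  have hDm : Measurable D := measurable_indicator_of_continuousOn isOpen_ball hdc
  set H : ℝ → ℝ≥0∞ := fun t => ENNReal.ofReal ‖D (circ t θ)‖ with hHdef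
  have hH : Measurable H :=
    ENNReal.measurable_ofReal.comp ((hDm.comp (circ_continuous θ).measurable).norm)
  set G : ℝ → ℝ≥0∞ := fun r => ∫⁻ t in Set.Ioc 0 r, H t with hG
  have hGmono : Monotone G := by
    intro r₁ r₂ h
    exact lintegral_mono' (Measure.restrict_mono (Set.Ioc_subset_Ioc le_rfl h) le_rfl) le_rfl
  have hGm : Measurable G := hGmono.measurable
  set c : ℝ≥0∞ := ENNReal.ofReal ‖f 0‖ with hc
  set E : ℂ := Complex.exp (θ * Complex.I) with hE
  -- FTC bound
  have henn : ∀ r ∈ Set.Ioo (0:ℝ) 1, ENNReal.ofReal ‖f (circ r θ)‖ ≤ c + G r := by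
    intro r hr
    have hmem : ∀ t ∈ Set.Icc (0:ℝ) r, circ t θ ∈ ball (0:ℂ) 1 :=
      fun t ht => circ_mem_ball ht.1 (lt_of_le_of_lt ht.2 hr.2)
    have hasD : ∀ t ∈ Set.uIcc (0:ℝ) r,
        HasDerivAt (fun s : ℝ => f (circ s θ)) (deriv f (circ t θ) * E) t := by
      intro t ht
      rw [Set.uIcc_of_le hr.1.le] at ht
      have hball := hmem t ht
      have hdiff : DifferentiableAt ℂ f (circ t θ) :=
        hf.differentiableAt (isOpen_ball.mem_nhds hball)
      have h1 : HasDerivAt (fun z : ℂ => z * E) E (t:ℂ) := hasDerivAt_mul_const E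
      have h2 : HasDerivAt (fun z : ℂ => f (z * E)) (deriv f (circ t θ) * E) (t:ℂ) := by
        have := HasDerivAt.comp (t:ℂ) (hdiff.hasDerivAt) h1
        exact this
      have h3 := h2.comp_ofReal
      simpa [circ] using h3
    have hcont : ContinuousOn (fun t : ℝ => deriv f (circ t θ) * E) (Set.Icc 0 r) := by
      apply ContinuousOn.mul _ continuousOn_const
      exact hdc.comp (circ_continuous θ).continuousOn hmem
    have hInt : IntervalIntegrable (fun t : ℝ => deriv f (circ t θ) * E) volume 0 r := by
      rw [intervalIntegrable_iff_integrableOn_Ioc_of_le hr.1.le]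
      exact (hcont.integrableOn_Icc).mono_set Set.Ioc_subset_Icc_self
    have hFTC : (∫ t in (0:ℝ)..r, deriv f (circ t θ) * E) = f (circ r θ) - f 0 := by
      rw [intervalIntegral.integral_eq_sub_of_hasDerivAt hasD hInt, circ_zero]
    have heq : (∫ t in (0:ℝ)..r, ‖deriv f (circ t θ) * E‖)
        = ∫ t in (0:ℝ)..r, ‖deriv f (circ t θ)‖ := by
      apply intervalIntegral.integral_congr
      intro t ht
      simp only [norm_mul, hE, Complex.norm_exp_ofReal_mul_I, mul_one]
    have hnorm : ‖f (circ r θ)‖ ≤ ‖f 0‖ + ∫ t in (0:ℝ)..r, ‖deriv f (circ t θ)‖ := by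
      have h1 : f (circ r θ) = f 0 + ∫ t in (0:ℝ)..r, deriv f (circ t θ) * E := by
        rw [hFTC]; ring
      rw [h1, ← heq]
      refine le_trans (norm_add_le _ _) (add_le_add_right ?_ _)
      exact intervalIntegral.norm_integral_le_integral_norm hr.1.le
    -- convert to ENNReal
    have hIntNorm : IntegrableOn (fun t : ℝ => ‖deriv f (circ t θ)‖) (Set.Ioc 0 r) := by
      have := hInt.norm
      rw [intervalIntegrable_iff_integrableOn_Ioc_of_le hr.1.le] at this
      apply this.congr_fun _ measurableSet_Ioc
      intro t ht
      simp only [norm_mul, hE, Complex.norm_exp_ofReal_mul_I, mul_one]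
    have hofReal : ENNReal.ofReal (∫ t in (0:ℝ)..r, ‖deriv f (circ t θ)‖) = G r := by
      rw [intervalIntegral.integral_of_le hr.1.le,
        ofReal_integral_eq_lintegral_ofReal hIntNorm
          (ae_of_all _ fun t => norm_nonneg _)]
      apply setLIntegral_congr_fun measurableSet_Ioc
      intro t ht
      rw [hHdef, hD]
      simp only
      rw [Set.indicator_of_mem (circ_mem_ball ht.1.le (lt_of_le_of_lt ht.2 hr.2))]
    calc ENNReal.ofReal ‖f (circ r θ)‖
        ≤ ENNReal.ofReal (‖f 0‖ + ∫ t in (0:ℝ)..r, ‖deriv f (circ t θ)‖) :=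
          ENNReal.ofReal_le_ofReal hnorm
      _ = c + G r := by
          rw [ENNReal.ofReal_add (norm_nonneg _) (by
            rw [intervalIntegral.integral_of_le hr.1.le]
            exact setIntegral_nonneg measurableSet_Ioc fun t _ => norm_nonneg _), hofReal]
  -- main chain
  have step1 : ∫⁻ r in Set.Ioc (0:ℝ) 1, ENNReal.ofReal (‖f (circ r θ)‖ ^ p)
      = ∫⁻ r in Set.Ioo (0:ℝ) 1, ENNReal.ofReal (‖f (circ r θ)‖ ^ p) := by
    rw [Measure.restrict_congr_set Ioo_ae_eq_Ioc]
  have step2 : ∫⁻ r in Set.Ioo (0:ℝ) 1, ENNReal.ofReal (‖f (circ r θ)‖ ^ p)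
      ≤ ∫⁻ r in Set.Ioo (0:ℝ) 1, ((fun _ => c) r + G r) ^ p := by
    apply lintegral_mono_ae
    filter_upwards [ae_restrict_mem measurableSet_Ioo] with r hr
    rw [← ENNReal.ofReal_rpow_of_nonneg (norm_nonneg _) hp0.le]
    exact ENNReal.rpow_le_rpow (henn r hr) hp0.le
  have step3 := ENNReal.lintegral_Lp_add_le (μ := volume.restrict (Set.Ioo (0:ℝ) 1))
    (f := fun _ => c) (g := G) aemeasurable_const hGm.aemeasurable hp
  have step4 : (∫⁻ _ in Set.Ioo (0:ℝ) 1, c ^ p) ^ (1/p) = c := by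
    rw [setLIntegral_const, Real.volume_Ioo, sub_zero, ENNReal.ofReal_one, mul_one,
      ← ENNReal.rpow_mul, mul_one_div_cancel hp0.ne', ENNReal.rpow_one]
  have hKeq : ∫⁻ t in Set.Ioo (0:ℝ) 1, (ENNReal.ofReal (1 - t) * H t) ^ p
      = ∫⁻ r in Set.Ioc (0:ℝ) 1,
          ENNReal.ofReal (‖((1 - ‖circ r θ‖ : ℝ) : ℂ) * deriv f (circ r θ)‖ ^ p) := by
    rw [← Measure.restrict_congr_set Ioo_ae_eq_Ioc]
    apply setLIntegral_congr_fun measurableSet_Ioo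
    intro t ht
    have h1t : (0:ℝ) ≤ 1 - t := by linarith [ht.2]
    have hmem := circ_mem_ball (θ := θ) ht.1.le ht.2
    rw [hHdef, hD]
    simp only
    rw [Set.indicator_of_mem hmem, ← ENNReal.ofReal_mul h1t,
      ENNReal.ofReal_rpow_of_nonneg (by positivity) hp0.le]
    congr 2
    rw [norm_mul, Complex.norm_real, Real.norm_eq_abs,
      circ_abs ht.1.le, abs_of_nonneg h1t]
  have step5 : (∫⁻ r in Set.Ioo (0:ℝ) 1, G r ^ p) ^ (1/p)
      ≤ ENNReal.ofReal p *
        (∫⁻ r in Set.Ioc (0:ℝ) 1,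
          ENNReal.ofReal (‖((1 - ‖circ r θ‖ : ℝ) : ℂ) * deriv f (circ r θ)‖ ^ p)) ^ (1/p) := by
    rw [← hKeq]
    calc (∫⁻ r in Set.Ioo (0:ℝ) 1, G r ^ p) ^ (1/p)
        ≤ (ENNReal.ofReal p ^ p
            * ∫⁻ t in Set.Ioo (0:ℝ) 1, (ENNReal.ofReal (1 - t) * H t) ^ p) ^ (1/p) :=
          ENNReal.rpow_le_rpow (hardy hp hH) (by positivity)
      _ = ENNReal.ofReal p *
            (∫⁻ t in Set.Ioo (0:ℝ) 1, (ENNReal.ofReal (1 - t) * H t) ^ p) ^ (1/p) := by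
          rw [ENNReal.mul_rpow_of_nonneg _ _ (by positivity : (0:ℝ) ≤ 1/p),
            ← ENNReal.rpow_mul, mul_one_div_cancel hp0.ne', ENNReal.rpow_one]
  calc (∫⁻ r in Set.Ioc (0:ℝ) 1, ENNReal.ofReal (‖f (circ r θ)‖ ^ p)) ^ (1/p)
      ≤ (∫⁻ r in Set.Ioo (0:ℝ) 1, ((fun _ => c) r + G r) ^ p) ^ (1/p) := by
        rw [step1]
        exact ENNReal.rpow_le_rpow step2 (by positivity)
    _ ≤ (∫⁻ _ in Set.Ioo (0:ℝ) 1, c ^ p) ^ (1/p)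
          + (∫⁻ r in Set.Ioo (0:ℝ) 1, G r ^ p) ^ (1/p) := step3
    _ ≤ c + ENNReal.ofReal p *
          (∫⁻ r in Set.Ioc (0:ℝ) 1,
            ENNReal.ofReal (‖((1 - ‖circ r θ‖ : ℝ) : ℂ) * deriv f (circ r θ)‖ ^ p)) ^ (1/p) := by
        rw [step4]
        exact add_le_add_right step5 _

lemma assemble {q' p : ℝ} (hq' : 1 ≤ q') (hp0 : 0 < p) {B C : ℝ → ℝ≥0∞} {c : ℝ≥0∞}
    (hC : AEMeasurable C (volume.restrict (Set.Ioc (0:ℝ) (2*Real.pi))))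
    (hrad : ∀ θ, B θ ^ (1/p) ≤ c + ENNReal.ofReal p * C θ ^ (1/p)) :
    (ENNReal.ofReal (1/(2*Real.pi)) *
        ∫⁻ θ in Set.Ioc (0:ℝ) (2*Real.pi), B θ ^ (q'/p)) ^ (1/q')
      ≤ ENNReal.ofReal p * (ENNReal.ofReal (1/(2*Real.pi)) *
          ∫⁻ θ in Set.Ioc (0:ℝ) (2*Real.pi), C θ ^ (q'/p)) ^ (1/q') + c := by
  have hq'0 : (0:ℝ) < q' := lt_of_lt_of_le one_pos hq'
  have hπ : (0:ℝ) < 2*Real.pi := by positivity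
  set k : ℝ≥0∞ := ENNReal.ofReal (1/(2*Real.pi)) with hk
  set I : Set ℝ := Set.Ioc (0:ℝ) (2*Real.pi) with hI
  have he : ∀ x : ℝ≥0∞, x ^ (q'/p) = (x ^ (1/p)) ^ q' := fun x => by
    rw [← ENNReal.rpow_mul]
    congr 1
    field_simp
  have hk2π : k * ENNReal.ofReal (2*Real.pi) = 1 := by
    rw [hk, ← ENNReal.ofReal_mul (by positivity), one_div_mul_cancel hπ.ne',
      ENNReal.ofReal_one]
  have hCp : AEMeasurable (fun θ => ENNReal.ofReal p * C θ ^ (1/p))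
      (volume.restrict I) :=
    aemeasurable_const.mul (ENNReal.continuous_rpow_const.measurable.comp_aemeasurable hC)
  have hpow_ne_top : (ENNReal.ofReal p) ^ q' ≠ ⊤ :=
    ENNReal.rpow_ne_top_of_nonneg hq'0.le ENNReal.ofReal_ne_top
  calc (k * ∫⁻ θ in I, B θ ^ (q'/p)) ^ (1/q')
      = k^(1/q') * (∫⁻ θ in I, (B θ ^ (1/p)) ^ q') ^ (1/q') := by
        simp_rw [he]
        rw [ENNReal.mul_rpow_of_nonneg _ _ (by positivity)]
    _ ≤ k^(1/q') * (∫⁻ θ in I,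
          ((fun _ => c) θ + (fun θ => ENNReal.ofReal p * C θ ^ (1/p)) θ) ^ q') ^ (1/q') := by
        apply mul_le_mul_right
        apply ENNReal.rpow_le_rpow _ (by positivity)
        exact lintegral_mono fun θ => ENNReal.rpow_le_rpow (hrad θ) hq'0.le
    _ ≤ k^(1/q') * ((∫⁻ _ in I, c ^ q') ^ (1/q')
          + (∫⁻ θ in I, (ENNReal.ofReal p * C θ ^ (1/p)) ^ q') ^ (1/q')) :=
        mul_le_mul_right (ENNReal.lintegral_Lp_add_le aemeasurable_const hCp hq') _
    _ = k^(1/q') * (c * (ENNReal.ofReal (2*Real.pi)) ^ (1/q')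
          + ENNReal.ofReal p * (∫⁻ θ in I, (C θ ^ (1/p)) ^ q') ^ (1/q')) := by
        congr 2
        · rw [setLIntegral_const, hI, Real.volume_Ioc, sub_zero,
            ENNReal.mul_rpow_of_nonneg _ _ (by positivity), ← ENNReal.rpow_mul,
            mul_one_div_cancel hq'0.ne', ENNReal.rpow_one]
        · simp_rw [ENNReal.mul_rpow_of_nonneg _ _ hq'0.le]
          rw [lintegral_const_mul' _ _ hpow_ne_top,
            ENNReal.mul_rpow_of_nonneg _ _ (by positivity : (0:ℝ) ≤ 1/q'),
            ← ENNReal.rpow_mul, mul_one_div_cancel hq'0.ne', ENNReal.rpow_one]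
    _ = c * (k * ENNReal.ofReal (2*Real.pi)) ^ (1/q')
          + ENNReal.ofReal p * (k * ∫⁻ θ in I, (C θ ^ (1/p)) ^ q') ^ (1/q') := by
        rw [mul_add, ENNReal.mul_rpow_of_nonneg _ _ (by positivity : (0:ℝ) ≤ 1/q'),
          ENNReal.mul_rpow_of_nonneg k _ (by positivity : (0:ℝ) ≤ 1/q')]
        ring
    _ = ENNReal.ofReal p * (k * ∫⁻ θ in I, C θ ^ (q'/p)) ^ (1/q') + c := by
        simp_rw [he]
        rw [hk2π, ENNReal.one_rpow, mul_one, add_comm]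


lemma measurable_Bg {p : ℝ} (hp0 : 0 < p) {f : ℂ → ℂ}
    (hf : DifferentiableOn ℂ f (ball (0:ℂ) 1)) :
    Measurable (fun θ : ℝ => ∫⁻ r in Set.Ioc (0:ℝ) 1,
      ENNReal.ofReal (‖((1 - ‖circ r θ‖ : ℝ) : ℂ) * deriv f (circ r θ)‖ ^ p)) := by
  have hdc : ContinuousOn (deriv f) (ball (0:ℂ) 1) :=
    ((hf.analyticOnNhd isOpen_ball).deriv).continuousOn
  set D : ℂ → ℂ := (ball (0:ℂ) 1).indicator (deriv f) with hD
  have hDm : Measurable D := measurable_indicator_of_continuousOn isOpen_ball hdc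
  set Φ : ℝ × ℝ → ℝ≥0∞ := fun x =>
    (ENNReal.ofReal (1 - x.2) * ENNReal.ofReal ‖D (circ x.2 x.1)‖) ^ p with hΦ
  have hcirc : Continuous fun x : ℝ × ℝ => circ x.2 x.1 := by
    simp only [circ]
    exact (Complex.continuous_ofReal.comp continuous_snd).mul
      (Complex.continuous_exp.comp
        ((Complex.continuous_ofReal.comp continuous_fst).mul continuous_const))
  have hΦm : Measurable Φ := by
    apply (ENNReal.continuous_rpow_const.measurable).comp
    exact (ENNReal.measurable_ofReal.comp (measurable_const.sub measurable_snd)).mul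
      (ENNReal.measurable_ofReal.comp ((hDm.comp hcirc.measurable).norm))
  have heq : (fun θ : ℝ => ∫⁻ r in Set.Ioc (0:ℝ) 1,
        ENNReal.ofReal (‖((1 - ‖circ r θ‖ : ℝ) : ℂ) * deriv f (circ r θ)‖ ^ p))
      = fun θ => ∫⁻ r in Set.Ioc (0:ℝ) 1, Φ (θ, r) := by
    funext θ
    apply setLIntegral_congr_fun measurableSet_Ioc
    intro r hr
    rcases lt_or_eq_of_le hr.2 with h1 | h1
    · have hmem := circ_mem_ball (θ := θ) hr.1.le h1
      have h1r : (0:ℝ) ≤ 1 - r := by linarith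
      rw [hΦ, hD]
      simp only
      rw [Set.indicator_of_mem hmem, ← ENNReal.ofReal_mul h1r,
        ENNReal.ofReal_rpow_of_nonneg (by positivity) hp0.le]
      congr 2
      rw [norm_mul, Complex.norm_real, Real.norm_eq_abs,
        circ_abs hr.1.le, abs_of_nonneg h1r]
    · rw [hΦ]
      simp only [← h1]
      rw [circ_abs hr.1.le, sub_self]
      simp only [Complex.ofReal_zero, zero_mul, norm_zero, ENNReal.ofReal_zero]
      rw [Real.zero_rpow hp0.ne', ENNReal.ofReal_zero, ENNReal.zero_rpow_of_pos hp0]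
  rw [heq]
  exact hΦm.lintegral_prod_right'

/-- Littlewood–Paley type inequality. For `1 ≤ p < ∞`, `1 ≤ q ≤ ∞` and any
analytic `f` on the unit disc, `ρ_{p,q}(f) ≤ p ρ_{p,q}((1-|z|) f'(z)) + |f(0)|`. -/
theorem stmt1 (p : ℝ) (q : ℝ≥0∞) (hp : 1 ≤ p) (hq : 1 ≤ q)
    (f : ℂ → ℂ) (hf : DifferentiableOn ℂ f (ball (0:ℂ) 1)) :
    rho p q f ≤
      ENNReal.ofReal p * rho p q (fun z => ((1 - ‖z‖ : ℝ) : ℂ) * deriv f z)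
        + ENNReal.ofReal ‖f 0‖ := by
  have hp0 : (0:ℝ) < p := lt_of_lt_of_le one_pos hp
  have hrad := fun θ => radial hp hf θ
  by_cases hqt : q = ⊤
  · subst hqt
    simp only [rho, if_pos]
    refine iSup_le fun θ => le_trans (hrad θ) ?_
    rw [add_comm]
    refine add_le_add_left (mul_le_mul_right ?_ _) _
    exact le_iSup (fun θ => (∫⁻ r in Set.Ioc (0:ℝ) 1,
      ENNReal.ofReal (‖((1 - ‖circ r θ‖ : ℝ) : ℂ) * deriv f (circ r θ)‖ ^ p)) ^ (1/p)) θ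
  · have hq' : (1:ℝ) ≤ q.toReal := by
      rw [← ENNReal.toReal_one]
      exact ENNReal.toReal_mono hqt hq
    simp only [rho, if_neg hqt]
    exact assemble hq' hp0 (measurable_Bg hp0 hf).aemeasurable hrad
end

section
/- Let 1 ≤ p < +∞ and let f be analytic on the unit disc 𝔻. Then for all ρ ∈ [0,1) and all θ ∈ [0,2π], (∫_ρ¹ |f(re^{iθ})|^p dr)^{1/p} ≤ p·(∫_ρ¹ |f'(re^{iθ})|^p (1-r)^p dr)^{1/p} + (1-ρ)^{1/p}·|f(ρe^{iθ})|. -/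
open MeasureTheory Metric Set intervalIntegral
open scoped ENNReal

/-- For `1 ≤ p < ∞`, `f` analytic on the unit disc, `ρ ∈ [0,1)` and
`θ ∈ [0,2π]`:
`(∫_ρ¹ |f(re^{iθ})|^p dr)^{1/p}
  ≤ p (∫_ρ¹ |f'(re^{iθ})|^p (1-r)^p dr)^{1/p} + (1-ρ)^{1/p} |f(ρe^{iθ})|`. -/
theorem stmt2 (p : ℝ) (hp : 1 ≤ p) (f : ℂ → ℂ)
    (hf : DifferentiableOn ℂ f (ball (0:ℂ) 1))
    (ρ : ℝ) (hρ : ρ ∈ Ico (0:ℝ) 1) (θ : ℝ) (hθ : θ ∈ Icc (0:ℝ) (2*Real.pi)) :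
    (∫⁻ r in Ioc ρ 1, ENNReal.ofReal (‖f (circ r θ)‖ ^ p)) ^ (1/p) ≤
      ENNReal.ofReal p *
        (∫⁻ r in Ioc ρ 1, ENNReal.ofReal (‖deriv f (circ r θ)‖ ^ p * (1-r) ^ p)) ^ (1/p)
      + ENNReal.ofReal ((1-ρ) ^ (1/p) * ‖f (circ ρ θ)‖) := by
  obtain ⟨hρ0, hρ1⟩ := hρ
  have hp0 : (0:ℝ) < p := lt_of_lt_of_le one_pos hp
  set c : ℂ := Complex.exp (θ * Complex.I) with hc_def
  have hc : ‖c‖ = 1 := by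
    simpa [hc_def] using Complex.abs_exp_ofReal_mul_I θ
  have hcirc : ∀ r : ℝ, circ r θ = (r:ℂ) * c := fun r => rfl
  have hmem : ∀ r : ℝ, |r| < 1 → circ r θ ∈ ball (0:ℂ) 1 := by
    intro r hr
    simp only [mem_ball, dist_zero_right, hcirc, norm_mul, hc, mul_one,
      Complex.norm_real, Real.norm_eq_abs]
    exact hr
  have hA : AnalyticOnNhd ℂ f (ball 0 1) := hf.analyticOnNhd isOpen_ball
  have hdc : ContinuousOn (deriv f) (ball (0:ℂ) 1) := hA.deriv.continuousOn
  set g : ℝ → ℝ := fun r => ‖deriv f (circ r θ)‖ with hg_def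
  have hg0 : ∀ r, 0 ≤ g r := fun r => norm_nonneg _
  have hgc : ∀ r ∈ Ioo (-1:ℝ) 1, ContinuousAt g r := by
    intro r hr
    have h1 : ContinuousAt (fun r : ℝ => circ r θ) r := by
      simp only [hcirc]
      exact (Complex.continuous_ofReal.mul continuous_const).continuousAt
    have h2 : ContinuousAt (deriv f) (circ r θ) :=
      hdc.continuousAt (isOpen_ball.mem_nhds (hmem r (abs_lt.2 ⟨hr.1, hr.2⟩)))
    exact ContinuousAt.norm (ContinuousAt.comp (g := deriv f) h2 h1)
  have hgi : ∀ a b : ℝ, a ∈ Ioo (-1:ℝ) 1 → b ∈ Ioo (-1:ℝ) 1 →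
      IntervalIntegrable g volume a b := by
    intro a b ha hb
    apply ContinuousOn.intervalIntegrable
    intro x hx
    exact (hgc x (ordConnected_Ioo.uIcc_subset ha hb hx)).continuousWithinAt
  have hρm : ρ ∈ Ioo (-1:ℝ) 1 := ⟨lt_of_lt_of_le neg_one_lt_zero hρ0, hρ1⟩
  set F : ℝ → ℝ := fun r => ∫ s in ρ..r, g s with hF_def
  have hF_deriv : ∀ r ∈ Ioo (-1:ℝ) 1, HasDerivAt F (g r) r := fun r hr =>
    intervalIntegral.integral_hasDerivAt_right (hgi ρ r hρm hr)
      (ContinuousAt.stronglyMeasurableAtFilter isOpen_Ioo hgc r hr) (hgc r hr)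
  have hF0 : ∀ r, ρ ≤ r → 0 ≤ F r := fun r hr =>
    intervalIntegral.integral_nonneg hr fun s _ => hg0 s
  have hFρ : F ρ = 0 := intervalIntegral.integral_same
  -- continuity of the complex derivative integrand
  have hdci : ∀ a b : ℝ, a ∈ Ioo (-1:ℝ) 1 → b ∈ Ioo (-1:ℝ) 1 →
      IntervalIntegrable (fun s => deriv f (circ s θ) * c) volume a b := by
    intro a b ha hb
    apply ContinuousOn.intervalIntegrable
    intro x hx
    have hx' := ordConnected_Ioo.uIcc_subset ha hb hx
    have h1 : ContinuousAt (fun r : ℝ => circ r θ) x := by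
      simp only [hcirc]
      exact (Complex.continuous_ofReal.mul continuous_const).continuousAt
    have h2 : ContinuousAt (deriv f) (circ x θ) :=
      hdc.continuousAt (isOpen_ball.mem_nhds (hmem x (abs_lt.2 ⟨hx'.1, hx'.2⟩)))
    have h3 : ContinuousAt (fun r : ℝ => deriv f (circ r θ)) x :=
      ContinuousAt.comp (g := deriv f) h2 h1
    exact (h3.mul continuousAt_const).continuousWithinAt
  -- L1 : FTC for f along the ray
  have L1 : ∀ r, ρ ≤ r → r < 1 →
      f (circ r θ) = f (circ ρ θ) + ∫ s in ρ..r, deriv f (circ s θ) * c := by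
    intro r hr1 hr2
    have hkey : ∀ s ∈ uIcc ρ r, HasDerivAt (fun t : ℝ => f (circ t θ))
        (deriv f (circ s θ) * c) s := by
      intro s hs
      rw [uIcc_of_le hr1] at hs
      have hsm : circ s θ ∈ ball (0:ℂ) 1 := by
        refine hmem s (abs_lt.2 ⟨by linarith [hs.1], by linarith [hs.2]⟩)
      have hfd : HasDerivAt f (deriv f (circ s θ)) (circ s θ) :=
        (hf.differentiableAt (isOpen_ball.mem_nhds hsm)).hasDerivAt
      have hz : HasDerivAt (fun z : ℂ => f (z * c)) (deriv f (circ s θ) * c) (s:ℂ) := by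
        simpa [hcirc, Function.comp_def] using HasDerivAt.comp (s:ℂ)
          (by simpa [hcirc] using hfd) (hasDerivAt_mul_const (x := (s:ℂ)) c)
      simpa [hcirc] using hz.comp_ofReal
    have := intervalIntegral.integral_eq_sub_of_hasDerivAt hkey
      (hdci ρ r hρm ⟨by linarith, hr2⟩)
    rw [this]; ring
  -- L2 : pointwise bound
  have L2 : ∀ r, ρ ≤ r → r < 1 → ‖f (circ r θ)‖ ≤ ‖f (circ ρ θ)‖ + F r := by
    intro r hr1 hr2
    rw [L1 r hr1 hr2]
    refine (norm_add_le _ _).trans (add_le_add_right ?_ _)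
    refine (intervalIntegral.norm_integral_le_integral_norm hr1).trans_eq ?_
    simp [hF_def, hg_def, hc]
  -- continuity facts for F-powers
  have hF_cont : ∀ s ∈ Ioo (-1:ℝ) 1, ContinuousAt F s := fun s hs =>
    (hF_deriv s hs).continuousAt
  have hFp1_cont : ∀ s ∈ Ioo (-1:ℝ) 1, ContinuousAt (fun t => F t ^ (p-1)) s := by
    intro s hs
    exact (Real.continuousAt_rpow_const _ _ (Or.inr (by linarith))).comp (hF_cont s hs)
  have hFp_cont : ∀ s ∈ Ioo (-1:ℝ) 1, ContinuousAt (fun t => F t ^ p) s := fun s hs =>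
    (Real.continuousAt_rpow_const _ _ (Or.inr hp0.le)).comp (hF_cont s hs)
  -- L3 : the key real inequality on [ρ, R]
  have L3 : ∀ R, ρ ≤ R → R < 1 →
      ∫ r in ρ..R, F r ^ p ≤ ∫ r in ρ..R, (1-r) * (p * F r ^ (p-1) * g r) := by
    intro R hR1 hR2
    have hRm : R ∈ Ioo (-1:ℝ) 1 := ⟨by linarith, hR2⟩
    have hsub : uIcc ρ R ⊆ Ioo (-1:ℝ) 1 := ordConnected_Ioo.uIcc_subset hρm hRm
    have hint1 : IntervalIntegrable (fun r => F r ^ p) volume ρ R := by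
      apply ContinuousOn.intervalIntegrable
      exact fun x hx => (hFp_cont x (hsub hx)).continuousWithinAt
    have hint2 : IntervalIntegrable (fun r => (1-r) * (p * F r ^ (p-1) * g r)) volume ρ R := by
      apply ContinuousOn.intervalIntegrable
      intro x hx
      exact (((continuousAt_const.sub continuousAt_id).mul
        ((continuousAt_const.mul (hFp1_cont x (hsub hx))).mul (hgc x (hsub hx)))).continuousWithinAt)
    have hderiv : ∀ r ∈ uIcc ρ R, HasDerivAt (fun t => (1-t) * F t ^ p)
        (-(F r ^ p) + (1-r) * (p * F r ^ (p-1) * g r)) r := by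
      intro r hr
      have h1 : HasDerivAt (fun t : ℝ => 1 - t) (-1) r := by
        simpa using (hasDerivAt_id r).const_sub 1
      have h2 : HasDerivAt (fun t => F t ^ p) (p * F r ^ (p-1) * g r) r := by
        have := (Real.hasDerivAt_rpow_const (x := F r) (p := p) (Or.inr hp)).comp r
          (hF_deriv r (hsub hr))
        simpa [mul_assoc, Function.comp_def] using this
      have : HasDerivAt (fun t => (1-t) * F t ^ p) _ r := h1.mul h2
      convert this using 1
      ring
    have hint_neg : IntervalIntegrable (fun r => -(F r ^ p)) volume ρ R := hint1.neg
    have hFTC := intervalIntegral.integral_eq_sub_of_hasDerivAt hderiv (hint_neg.add hint2)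
    rw [intervalIntegral.integral_add hint_neg hint2, intervalIntegral.integral_neg] at hFTC
    have hnn : 0 ≤ (1-R) * F R ^ p :=
      mul_nonneg (by linarith) (Real.rpow_nonneg (hF0 R hR1) p)
    rw [hFρ, Real.zero_rpow hp0.ne'] at hFTC
    have : -(∫ r in ρ..R, F r ^ p) + ∫ r in ρ..R, (1-r) * (p * F r ^ (p-1) * g r)
        = (1-R) * F R ^ p := by rw [hFTC]; ring
    linarith
  -- aemeasurability helpers on subintervals of (-1,1)
  have hmF : ∀ s : Set ℝ, MeasurableSet s → s ⊆ Ioo (-1:ℝ) 1 →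
      AEMeasurable (fun r => ENNReal.ofReal (F r)) (volume.restrict s) := by
    intro s hs hsub
    exact (ContinuousOn.aemeasurable
      (fun x hx => (hF_cont x (hsub hx)).continuousWithinAt) hs).ennreal_ofReal
  have hmG : ∀ s : Set ℝ, MeasurableSet s → s ⊆ Ioo (-1:ℝ) 1 →
      AEMeasurable (fun r => ENNReal.ofReal (g r * (1-r))) (volume.restrict s) := by
    intro s hs hsub
    refine (ContinuousOn.aemeasurable ?_ hs).ennreal_ofReal
    exact fun x hx => ((hgc x (hsub hx)).mul
      (continuousAt_const.sub continuousAt_id)).continuousWithinAt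
  set A : ℝ≥0∞ := (∫⁻ r in Ioc ρ 1, ENNReal.ofReal (g r * (1-r)) ^ p) ^ (1/p) with hA_def
  have hmain : ∀ R, ρ ≤ R → R < 1 →
      (∫⁻ r in Ioc ρ R, ENNReal.ofReal (F r) ^ p) ≤ (ENNReal.ofReal p * A) ^ p := by
    intro R hR1 hR2
    have hRm : R ∈ Ioo (-1:ℝ) 1 := ⟨by linarith, hR2⟩
    have hsubI : Ioc ρ R ⊆ Ioo (-1:ℝ) 1 := fun x hx =>
      ⟨by linarith [hx.1], lt_of_le_of_lt hx.2 hR2⟩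
    have hsub : uIcc ρ R ⊆ Ioo (-1:ℝ) 1 := ordConnected_Ioo.uIcc_subset hρm hRm
    have hint1 : IntervalIntegrable (fun r => F r ^ p) volume ρ R :=
      ContinuousOn.intervalIntegrable fun x hx => (hFp_cont x (hsub hx)).continuousWithinAt
    have hint2 : IntervalIntegrable (fun r => (1-r) * (p * F r ^ (p-1) * g r)) volume ρ R :=
      ContinuousOn.intervalIntegrable fun x hx =>
        (((continuousAt_const.sub continuousAt_id).mul
          ((continuousAt_const.mul (hFp1_cont x (hsub hx))).mul
            (hgc x (hsub hx)))).continuousWithinAt)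
    set I : ℝ≥0∞ := ∫⁻ r in Ioc ρ R, ENNReal.ofReal (F r) ^ p with hI_def
    have hIeq : I = ENNReal.ofReal (∫ r in ρ..R, F r ^ p) := by
      rw [hI_def, intervalIntegral.integral_of_le hR1,
        ofReal_integral_eq_lintegral_ofReal hint1.1
          ((ae_restrict_iff' measurableSet_Ioc).2 (Filter.Eventually.of_forall
            fun r hr => Real.rpow_nonneg (hF0 r hr.1.le) p))]
      refine setLIntegral_congr_fun measurableSet_Ioc (
        fun r hr => ?_)
      rw [ENNReal.ofReal_rpow_of_nonneg (hF0 r hr.1.le) hp0.le]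
    have hIfin : I ≠ ⊤ := by rw [hIeq]; exact ENNReal.ofReal_ne_top
    have hstep : I ≤ ENNReal.ofReal p *
        ∫⁻ r in Ioc ρ R, ENNReal.ofReal (F r) ^ (p-1) * ENNReal.ofReal (g r * (1-r)) := by
      rw [hIeq]
      refine (ENNReal.ofReal_le_ofReal (L3 R hR1 hR2)).trans ?_
      rw [intervalIntegral.integral_of_le hR1,
        ofReal_integral_eq_lintegral_ofReal hint2.1
          ((ae_restrict_iff' measurableSet_Ioc).2 (Filter.Eventually.of_forall
            fun r hr => by
              have := hF0 r hr.1.le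
              have h1r : (0:ℝ) ≤ 1 - r := by linarith [hr.2]
              positivity))]
      rw [← lintegral_const_mul' _ _ ENNReal.ofReal_ne_top]
      refine le_of_eq (setLIntegral_congr_fun measurableSet_Ioc
        (fun r hr => ?_))
      have hFr := hF0 r hr.1.le
      have hrw : (1-r) * (p * F r ^ (p-1) * g r) = p * (F r ^ (p-1) * (g r * (1-r))) := by ring
      rw [hrw, ENNReal.ofReal_mul hp0.le,
        ENNReal.ofReal_mul (Real.rpow_nonneg hFr _),
        ← ENNReal.ofReal_rpow_of_nonneg hFr (by linarith : (0:ℝ) ≤ p - 1)]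
    -- now get I ^ (1/p) ≤ ofReal p * A
    have hfinal : I ^ (1/p) ≤ ENNReal.ofReal p * A := by
      rcases eq_or_lt_of_le hp with h1 | h1
    -- p = 1
      · have hp1 : p = 1 := h1.symm
        subst hp1
        simp only [ENNReal.rpow_one, one_div_one, sub_self, ENNReal.rpow_zero, one_mul] at hstep ⊢
        refine hstep.trans ?_
        refine mul_le_mul_right ?_ _
        have hmono := lintegral_mono_set (μ := volume)
          (f := fun r => ENNReal.ofReal (g r * (1-r)))
          (Ioc_subset_Ioc_right (hR2.le : R ≤ 1) : Ioc ρ R ⊆ Ioc ρ 1)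
        refine hmono.trans_eq ?_
        rw [hA_def]
        simp [ENNReal.rpow_one]
      · -- 1 < p
        set q := Real.conjExponent p with hq_def
        have hpq : p.HolderConjugate q := Real.HolderConjugate.conjExponent h1
        have hmFq : AEMeasurable (fun r => ENNReal.ofReal (F r) ^ (p-1))
            (volume.restrict (Ioc ρ R)) :=
          (ENNReal.continuous_rpow_const.measurable).comp_aemeasurable
            (hmF _ measurableSet_Ioc hsubI)
        have hHold := ENNReal.lintegral_mul_le_Lp_mul_Lq (volume.restrict (Ioc ρ R)) hpq
          (hmG _ measurableSet_Ioc hsubI) hmFq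
        have hcomm : (∫⁻ r in Ioc ρ R, ENNReal.ofReal (F r) ^ (p-1)
              * ENNReal.ofReal (g r * (1-r)))
            = ∫⁻ r in Ioc ρ R, ((fun r => ENNReal.ofReal (g r * (1-r))) *
              fun r => ENNReal.ofReal (F r) ^ (p-1)) r := by
          refine lintegral_congr fun r => ?_
          simp [mul_comm]
        have hqpow : (∫⁻ r in Ioc ρ R, ((fun r => ENNReal.ofReal (F r) ^ (p-1)) r) ^ q) = I := by
          refine lintegral_congr fun r => ?_
          rw [← ENNReal.rpow_mul, hpq.sub_one_mul_conj]
        have hq_pos : (0:ℝ) < q := hpq.symm.pos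
        have hGR : (∫⁻ r in Ioc ρ R, ENNReal.ofReal (g r * (1-r)) ^ p) ^ (1/p) ≤ A := by
          rw [hA_def]
          exact ENNReal.rpow_le_rpow
            (lintegral_mono_set (Ioc_subset_Ioc_right (hR2.le : R ≤ 1) : Ioc ρ R ⊆ Ioc ρ 1))
            (by positivity)
        have hbound : I ≤ (ENNReal.ofReal p * A) * I ^ (1/q) := by
          refine hstep.trans ?_
          rw [hcomm]
          refine (mul_le_mul_right hHold _).trans ?_
          rw [hqpow, mul_assoc]
          exact mul_le_mul_right (mul_le_mul_left hGR _) _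
        by_cases hI0 : I = 0
        · rw [hI0, ENNReal.zero_rpow_of_pos (by positivity)]
          exact zero_le
        · have hq0 : I ^ (1/q) ≠ 0 := by
            simp only [Ne, ENNReal.rpow_eq_zero_iff, not_or, not_and]
            exact ⟨fun h => absurd h hI0, fun h => absurd h hIfin⟩
          have hqt : I ^ (1/q) ≠ ⊤ :=
            ENNReal.rpow_ne_top_of_nonneg (by positivity) hIfin
          have hsplit : I ^ (1/p) * I ^ (1/q) = I := by
            rw [← ENNReal.rpow_add _ _ hI0 hIfin,
              show 1/p + 1/q = 1 by
                rw [one_div, one_div]; exact hpq.inv_add_inv_eq_one,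
              ENNReal.rpow_one]
          rw [← ENNReal.mul_le_mul_iff_left hq0 hqt, hsplit]
          exact hbound
    -- raise to the p-th power
    calc I = (I ^ (1/p)) ^ p := by
          rw [← ENNReal.rpow_mul, one_div, inv_mul_cancel₀ hp0.ne', ENNReal.rpow_one]
      _ ≤ (ENNReal.ofReal p * A) ^ p := ENNReal.rpow_le_rpow hfinal hp0.le
  -- limiting step R → 1
  have hHardy : (∫⁻ r in Ioo ρ 1, ENNReal.ofReal (F r) ^ p) ≤ (ENNReal.ofReal p * A) ^ p := by
    have h1ρ : (0:ℝ) < 1 - ρ := by linarith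
    set u : ℕ → ℝ := fun n => 1 - (1-ρ)/(n+1) with hu_def
    have hu_lt : ∀ n : ℕ, u n < 1 := by
      intro n
      have hpos : (0:ℝ) < (1-ρ)/(n+1) := by positivity
      simp only [hu_def]; linarith
    have hu_ge : ∀ n : ℕ, ρ ≤ u n := by
      intro n
      have h2 : (1-ρ)/((n:ℝ)+1) ≤ 1-ρ := by
        rw [div_le_iff₀ (by positivity)]
        nlinarith [Nat.cast_nonneg (α := ℝ) n]
      simp only [hu_def]; linarith
    have hu_mono : Monotone u := by
      intro a b hab
      simp only [hu_def, sub_le_sub_iff_left]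
      have hba : ((a:ℝ)+1) ≤ ((b:ℝ)+1) := by exact_mod_cast Nat.succ_le_succ hab
      rw [div_le_div_iff₀ (by positivity) (by positivity)]
      nlinarith [h1ρ.le]
    set h : ℝ → ℝ≥0∞ := fun r => ENNReal.ofReal (F r) ^ p with hh_def
    have hsubn : ∀ n : ℕ, Ioc ρ (u n) ⊆ Ioo (-1:ℝ) 1 := fun n x hx =>
      ⟨by linarith [hx.1], lt_of_le_of_lt hx.2 (hu_lt n)⟩
    have hmeas : ∀ n : ℕ, AEMeasurable (fun r => (Ioc ρ (u n)).indicator h r) volume := by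
      intro n
      rw [aemeasurable_indicator_iff measurableSet_Ioc]
      exact (ENNReal.continuous_rpow_const.measurable).comp_aemeasurable
        (hmF _ measurableSet_Ioc (hsubn n))
    have hmono : ∀ r : ℝ, Monotone fun n => (Ioc ρ (u n)).indicator h r := by
      intro r a b hab
      exact Set.indicator_le_indicator_of_subset
        (Ioc_subset_Ioc_right (hu_mono hab)) (fun x => zero_le) r
    have hind : ∀ r : ℝ, (⨆ n, (Ioc ρ (u n)).indicator h r) = (Ioo ρ 1).indicator h r := by
      intro r
      by_cases hr : r ∈ Ioo ρ 1
      · rw [Set.indicator_of_mem hr]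
        refine le_antisymm (iSup_le fun n => ?_) ?_
        · by_cases hrn : r ∈ Ioc ρ (u n)
          · rw [Set.indicator_of_mem hrn]
          · rw [Set.indicator_of_notMem hrn]; exact zero_le
        · obtain ⟨n, hn⟩ := exists_nat_gt ((1-ρ)/(1-r))
          have hr2 : (0:ℝ) < 1 - r := by linarith [hr.2]
          have hle : r ≤ u n := by
            have : (1-ρ)/((n:ℝ)+1) ≤ 1 - r := by
              rw [div_le_iff₀ (by positivity)]
              have h4 : 1 - ρ < (n:ℝ) * (1-r) := (div_lt_iff₀ hr2).1 hn
              nlinarith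
            simp only [hu_def]; linarith
          exact le_iSup_of_le n (le_of_eq (Set.indicator_of_mem (show r ∈ Ioc ρ (u n) from ⟨hr.1, hle⟩) h).symm)
      · rw [Set.indicator_of_notMem hr]
        refine le_antisymm (iSup_le fun n => ?_) (zero_le)
        rw [Set.indicator_of_notMem]
        intro hc
        exact hr ⟨hc.1, lt_of_le_of_lt hc.2 (hu_lt n)⟩
    calc (∫⁻ r in Ioo ρ 1, h r) = ∫⁻ r, (Ioo ρ 1).indicator h r := by
          rw [lintegral_indicator measurableSet_Ioo]
      _ = ∫⁻ r, ⨆ n, (Ioc ρ (u n)).indicator h r := by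
          refine lintegral_congr fun r => ?_
          rw [hind r]
      _ = ⨆ n, ∫⁻ r, (Ioc ρ (u n)).indicator h r :=
          lintegral_iSup' hmeas (Filter.Eventually.of_forall hmono)
      _ = ⨆ n, ∫⁻ r in Ioc ρ (u n), h r := by
          refine iSup_congr fun n => ?_
          rw [lintegral_indicator measurableSet_Ioc]
      _ ≤ (ENNReal.ofReal p * A) ^ p := iSup_le fun n => hmain (u n) (hu_ge n) (hu_lt n)
  -- final assembly
  set c₀ := ‖f (circ ρ θ)‖ with hc0_def
  have hc00 : 0 ≤ c₀ := norm_nonneg _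
  have hres : volume.restrict (Ioc ρ (1:ℝ)) = volume.restrict (Ioo ρ 1) :=
    (Measure.restrict_congr_set Ioo_ae_eq_Ioc).symm
  have hsubIoo : Ioo ρ (1:ℝ) ⊆ Ioo (-1:ℝ) 1 := fun x hx =>
    ⟨by linarith [hx.1], hx.2⟩
  have hHardy' : (∫⁻ r in Ioo ρ 1, ENNReal.ofReal (F r) ^ p) ^ (1/p)
      ≤ ENNReal.ofReal p * A := by
    refine (ENNReal.rpow_le_rpow hHardy (by positivity)).trans_eq ?_
    rw [← ENNReal.rpow_mul, mul_one_div_cancel hp0.ne', ENNReal.rpow_one]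
  have hAeq : A = (∫⁻ r in Ioo ρ 1, ENNReal.ofReal (g r ^ p * (1-r) ^ p)) ^ (1/p) := by
    rw [hA_def, hres]
    congr 1
    refine setLIntegral_congr_fun measurableSet_Ioo (
      fun r hr => ?_)
    have h1r : (0:ℝ) ≤ 1 - r := by linarith [hr.2]
    rw [ENNReal.ofReal_rpow_of_nonneg (mul_nonneg (hg0 r) h1r) hp0.le,
      Real.mul_rpow (hg0 r) h1r]
  have hconst : (∫⁻ (_ : ℝ) in Ioo ρ 1, ENNReal.ofReal c₀ ^ p) ^ (1/p)
      = ENNReal.ofReal ((1-ρ) ^ (1/p) * c₀) := by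
    rw [setLIntegral_const, Real.volume_Ioo,
      ENNReal.mul_rpow_of_nonneg _ _ (by positivity : (0:ℝ) ≤ 1/p),
      ← ENNReal.rpow_mul, mul_one_div_cancel hp0.ne', ENNReal.rpow_one,
      ENNReal.ofReal_rpow_of_nonneg (by linarith) (by positivity),
      ← ENNReal.ofReal_mul hc00]
    rw [mul_comm]
  rw [hres]
  set φ : ℝ → ℝ≥0∞ := fun r => ENNReal.ofReal (F r) with hφ_def
  set ψ : ℝ → ℝ≥0∞ := fun _ => ENNReal.ofReal c₀ with hψ_def
  calc (∫⁻ r in Ioo ρ 1, ENNReal.ofReal (‖f (circ r θ)‖ ^ p)) ^ (1/p)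
      ≤ (∫⁻ r in Ioo ρ 1, (φ + ψ) r ^ p) ^ (1/p) := by
        refine ENNReal.rpow_le_rpow (lintegral_mono_ae ?_) (by positivity)
        refine (ae_restrict_iff' measurableSet_Ioo).2 (Filter.Eventually.of_forall
          fun r hr => ?_)
        have h2 := L2 r hr.1.le hr.2
        have e1 : ENNReal.ofReal (‖f (circ r θ)‖ ^ p)
            = ENNReal.ofReal ‖f (circ r θ)‖ ^ p :=
          (ENNReal.ofReal_rpow_of_nonneg (norm_nonneg _) hp0.le).symm
        rw [e1]
        refine ENNReal.rpow_le_rpow ?_ hp0.le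
        simp only [Pi.add_apply, hφ_def, hψ_def]
        calc ENNReal.ofReal ‖f (circ r θ)‖ ≤ ENNReal.ofReal (c₀ + F r) :=
              ENNReal.ofReal_le_ofReal h2
          _ = ENNReal.ofReal (F r) + ENNReal.ofReal c₀ := by
              rw [ENNReal.ofReal_add hc00 (hF0 r hr.1.le), add_comm]
    _ ≤ (∫⁻ r in Ioo ρ 1, φ r ^ p) ^ (1/p)
        + (∫⁻ r in Ioo ρ 1, ψ r ^ p) ^ (1/p) :=
        ENNReal.lintegral_Lp_add_le (hmF _ measurableSet_Ioo hsubIoo)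
          aemeasurable_const hp
    _ ≤ ENNReal.ofReal p * A + ENNReal.ofReal ((1-ρ) ^ (1/p) * c₀) := by
        rw [hφ_def, hψ_def]
        rw [hconst]
        exact add_le_add_left hHardy' _
    _ = ENNReal.ofReal p *
          (∫⁻ r in Ioo ρ 1, ENNReal.ofReal (g r ^ p * (1-r) ^ p)) ^ (1/p)
        + ENNReal.ofReal ((1-ρ) ^ (1/p) * c₀) := by rw [hAeq]
end

section
/- Let 1 ≤ p < +∞. Every function g in the Bloch space 𝓑 belongs to RM(p,0); that is, if g is analytic on 𝔻 with sup_{z∈𝔻}(1-|z|²)|g'(z)| < ∞, then lim_{ρ→1⁻} sup_θ (∫_ρ¹ |g(re^{iθ})|^p dr)^{1/p} = 0. -/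
open MeasureTheory Metric Set Filter
open scoped ENNReal

lemma bloch_growth {g : ℂ → ℂ} {M : ℝ}
    (hg : DifferentiableOn ℂ g (ball (0:ℂ) 1))
    (hM : ∀ z ∈ ball (0:ℂ) 1, (1 - ‖z‖ ^ 2) * ‖deriv g z‖ ≤ M)
    (hM0 : 0 ≤ M) (θ : ℝ) {r : ℝ} (hr0 : 0 ≤ r) (hr1 : r < 1) :
    ‖g (circ r θ)‖ ≤ ‖g 0‖ + M * (-Real.log (1 - r)) := by
  set e : ℂ := Complex.exp (θ * Complex.I) with he
  have hne : ‖e‖ = 1 := Complex.norm_exp_ofReal_mul_I θ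
  have hmem : ∀ t : ℝ, 0 ≤ t → t < 1 → (↑t * e) ∈ ball (0:ℂ) 1 := by
    intro t ht0 ht1
    simp only [mem_ball, dist_zero_right, norm_mul, hne, mul_one, Complex.norm_real,
      Real.norm_eq_abs, abs_of_nonneg ht0]
    exact ht1
  set f : ℝ → ℂ := fun t => g (↑t * e) with hf
  set B : ℝ → ℝ := fun t => ‖g 0‖ + M * (-Real.log (1 - t)) with hB
  set f' : ℝ → ℂ := fun t => e • deriv g (↑t * e) with hf'
  set B' : ℝ → ℝ := fun t => M * (1 - t)⁻¹ with hB'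
  have hcf : ContinuousOn f (Icc 0 r) := by
    apply (hg.continuousOn).comp
    · exact (Complex.continuous_ofReal.mul continuous_const).continuousOn
    · intro t ht
      exact hmem t ht.1 (lt_of_le_of_lt ht.2 hr1)
  have hdf : ∀ x ∈ Ico (0:ℝ) r, HasDerivWithinAt f (f' x) (Ici x) x := by
    intro x hx
    obtain ⟨hx0, hxr⟩ := hx
    have hx1 : x < 1 := hxr.trans hr1
    have h1 : HasDerivAt (fun t : ℝ => (↑t * e : ℂ)) e x := by
      simpa using (Complex.ofRealCLM.hasDerivAt (x := x)).mul_const e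
    have h2 : HasDerivAt g (deriv g (↑x * e)) (↑x * e) :=
      (hg.differentiableAt (isOpen_ball.mem_nhds (hmem x hx0 hx1))).hasDerivAt
    exact (HasDerivAt.scomp x h2 h1).hasDerivWithinAt
  have h0 : ‖f 0‖ ≤ B 0 := by simp [hf, hB]
  have hcB : ContinuousOn B (Icc 0 r) := by
    apply continuousOn_const.add (continuousOn_const.mul _)
    apply ContinuousOn.neg
    apply ContinuousOn.log (continuousOn_const.sub continuousOn_id)
    intro t ht
    have : t < 1 := lt_of_le_of_lt ht.2 hr1
    intro h; simp only [Pi.sub_apply, id] at h; linarith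
  have hdB : ∀ x ∈ Ico (0:ℝ) r, HasDerivWithinAt B (B' x) (Ici x) x := by
    intro x hx
    have hx1 : x < 1 := hx.2.trans hr1
    have h1x : (1:ℝ) - x ≠ 0 := by intro h; rw [sub_eq_zero] at h; linarith
    have hlog : HasDerivAt (fun t : ℝ => Real.log (1 - t)) ((1 - x)⁻¹ * (-1)) x := by
      have hinner : HasDerivAt (fun t : ℝ => 1 - t) (-1) x := (hasDerivAt_id x).const_sub 1
      exact (Real.hasDerivAt_log h1x).comp x hinner
    have hd : HasDerivAt B (B' x) x := by
      have : HasDerivAt (fun t : ℝ => ‖g 0‖ + M * -Real.log (1 - t)) (M * -((1 - x)⁻¹ * (-1))) x :=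
        ((hlog.neg).const_mul M).const_add ‖g 0‖
      convert this using 1
      simp [hB']
    exact hd.hasDerivWithinAt
  have hbound : ∀ x ∈ Ico (0:ℝ) r, ‖f' x‖ ≤ B' x := by
    intro x hx
    obtain ⟨hx0, hxr⟩ := hx
    have hx1 : x < 1 := hxr.trans hr1
    have hz : (↑x * e) ∈ ball (0:ℂ) 1 := hmem x hx0 hx1
    have habs : ‖(↑x * e : ℂ)‖ = x := by
      have h : ‖(↑x * e : ℂ)‖ = x := by
        simp [norm_mul, hne, Complex.norm_real, Real.norm_eq_abs, abs_of_nonneg hx0]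
      exact h
    have hb := hM _ hz
    rw [habs] at hb
    have h4 : (0:ℝ) < 1 - x := by linarith
    have hpos : 0 < 1 - x ^ 2 := by nlinarith
    have h1 : ‖deriv g (↑x * e)‖ ≤ M / (1 - x ^ 2) := by
      rw [le_div_iff₀ hpos]; linarith [hb]
    have h3 : (1:ℝ) - x ≤ 1 - x ^ 2 := by nlinarith
    have h2 : M / (1 - x ^ 2) ≤ M * (1 - x)⁻¹ := by
      rw [div_eq_mul_inv]
      exact mul_le_mul_of_nonneg_left (inv_anti₀ h4 h3) hM0
    calc ‖f' x‖ = ‖deriv g (↑x * e)‖ := by rw [hf']; simp [norm_smul, hne]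
      _ ≤ M * (1 - x)⁻¹ := h1.trans h2
  have key := image_norm_le_of_norm_deriv_right_le_deriv_boundary' hcf hdf h0 hcB hdB hbound
    (x := r) ⟨hr0, le_refl r⟩
  simpa [circ, hf, hB] using key

lemma pow_bound {a M p : ℝ} (ha : 0 ≤ a) (hM0 : 0 ≤ M) (hp : 1 ≤ p) {r y : ℝ}
    (hr0 : 0 < r) (hr1 : r < 1) (hy : y ≤ a + M * (-Real.log (1 - r))) (hy0 : 0 ≤ y) :
    y ^ p ≤ (a + 4 * p * M) ^ p * (1 - r) ^ (-(1/2) : ℝ) := by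
  have hp0 : 0 < p := lt_of_lt_of_le one_pos hp
  set x : ℝ := -Real.log (1 - r) with hx
  have h1r : (0:ℝ) < 1 - r := by linarith
  have hx0 : 0 ≤ x := by
    have := Real.log_nonpos (show (0:ℝ) ≤ 1 - r by linarith) (show (1:ℝ) - r ≤ 1 by linarith)
    simp only [hx]; linarith
  have hexp1 : 1 ≤ Real.exp (x / (4 * p)) := Real.one_le_exp (by positivity)
  have hxle : x ≤ 4 * p * Real.exp (x / (4 * p)) := by
    have h := Real.add_one_le_exp (x / (4 * p))
    have h4p : (0:ℝ) < 4 * p := by positivity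
    have h' : x / (4 * p) ≤ Real.exp (x / (4 * p)) := by linarith
    have h'' := (div_le_iff₀ h4p).mp h'
    linarith [mul_comm (Real.exp (x / (4 * p))) (4 * p), h'']
  have h2 : a + M * x ≤ (a + 4 * p * M) * Real.exp (x / (4 * p)) := by
    nlinarith [mul_le_mul_of_nonneg_left hxle hM0, mul_le_mul_of_nonneg_left hexp1 ha,
      mul_le_mul_of_nonneg_left hexp1 (by positivity : (0:ℝ) ≤ 4 * p * M)]
  have haK : (0:ℝ) ≤ a + 4 * p * M := by positivity
  have h3 : y ^ p ≤ ((a + 4 * p * M) * Real.exp (x / (4 * p))) ^ p :=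
    Real.rpow_le_rpow hy0 (hy.trans h2) hp0.le
  have h4 : ((a + 4 * p * M) * Real.exp (x / (4 * p))) ^ p
      = (a + 4 * p * M) ^ p * Real.exp (x / 4) := by
    rw [Real.mul_rpow haK (Real.exp_pos _).le]
    congr 1
    rw [Real.rpow_def_of_pos (Real.exp_pos _), Real.log_exp]
    congr 1
    field_simp
  have h5 : Real.exp (x / 4) ≤ (1 - r) ^ (-(1/2) : ℝ) := by
    have e1 : (1 - r) ^ (-(1/4) : ℝ) = Real.exp (x / 4) := by
      rw [Real.rpow_def_of_pos h1r]
      congr 1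
      rw [hx]; ring
    rw [← e1]
    exact Real.rpow_le_rpow_of_exponent_ge h1r (by linarith) (by norm_num)
  calc y ^ p ≤ (a + 4 * p * M) ^ p * Real.exp (x / 4) := h4 ▸ h3
    _ ≤ (a + 4 * p * M) ^ p * (1 - r) ^ (-(1/2) : ℝ) :=
        mul_le_mul_of_nonneg_left h5 (Real.rpow_nonneg haK p)

lemma tail_integral {K ρ : ℝ} (hK : 0 ≤ K) (hρ1 : ρ < 1) :
    ∫⁻ r in Ioc ρ 1, ENNReal.ofReal (K * (1 - r) ^ (-(1/2) : ℝ))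
      = ENNReal.ofReal (K * (2 * (1 - ρ) ^ ((1/2) : ℝ))) := by
  have hint : IntervalIntegrable (fun x : ℝ => K * (1 - x) ^ (-(1/2) : ℝ)) volume ρ 1 := by
    have h0 := intervalIntegral.intervalIntegrable_rpow' (show (-1:ℝ) < -(1/2) by norm_num) (a := 0) (b := 1 - ρ)
    have h1 := (h0.comp_sub_left 1).symm
    simp only [sub_zero, sub_sub_cancel] at h1
    exact h1.const_mul K
  have hIoc : IntegrableOn (fun x : ℝ => K * (1 - x) ^ (-(1/2) : ℝ)) (Ioc ρ 1) := hint.1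
  have hae : 0 ≤ᵐ[volume.restrict (Ioc ρ 1)] fun x : ℝ => K * (1 - x) ^ (-(1/2) : ℝ) := by
    refine (ae_restrict_iff' measurableSet_Ioc).mpr (Eventually.of_forall fun x hx => ?_)
    exact mul_nonneg hK (Real.rpow_nonneg (by linarith [hx.2]) _)
  rw [← ofReal_integral_eq_lintegral_ofReal hIoc hae]
  congr 1
  rw [← intervalIntegral.integral_of_le hρ1.le, intervalIntegral.integral_const_mul]
  congr 1
  have := intervalIntegral.integral_comp_sub_left (a := ρ) (b := 1)
    (fun u : ℝ => u ^ (-(1/2) : ℝ)) 1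
  rw [this]
  rw [integral_rpow (Or.inl (by norm_num))]
  norm_num
  ring

/-- Let `1 ≤ p < ∞`. Every Bloch function belongs to `RM(p,0)`: if `g` is
analytic on the unit disc with `sup_{z∈𝔻} (1-|z|²)|g'(z)| < ∞`, then
`lim_{ρ→1⁻} sup_θ (∫_ρ¹ |g(re^{iθ})|^p dr)^{1/p} = 0`. -/
theorem stmt8 (p : ℝ) (hp : 1 ≤ p) (g : ℂ → ℂ)
    (hg : DifferentiableOn ℂ g (ball (0:ℂ) 1))
    (hBloch : ∃ M : ℝ, ∀ z ∈ ball (0:ℂ) 1, (1 - ‖z‖ ^ 2) * ‖deriv g z‖ ≤ M) :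
    Tendsto (fun ρ : ℝ => ⨆ θ : ℝ,
        (∫⁻ r in Ioc ρ 1, ENNReal.ofReal (‖g (circ r θ)‖ ^ p)) ^ (1/p))
      (nhdsWithin 1 (Iio (1:ℝ))) (nhds 0) := by
  obtain ⟨M₀, hM₀⟩ := hBloch
  set M := max M₀ 0 with hMdef
  have hM : ∀ z ∈ ball (0:ℂ) 1, (1 - ‖z‖ ^ 2) * ‖deriv g z‖ ≤ M :=
    fun z hz => (hM₀ z hz).trans (le_max_left _ _)
  have hM0 : (0:ℝ) ≤ M := le_max_right _ _
  have hp0 : 0 < p := lt_of_lt_of_le one_pos hp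
  set K := (‖g 0‖ + 4 * p * M) ^ p with hKdef
  have hK0 : 0 ≤ K := Real.rpow_nonneg (by positivity) _
  set Φ : ℝ → ℝ≥0∞ := fun ρ => ENNReal.ofReal ((K * (2 * (1 - ρ) ^ ((1/2):ℝ))) ^ (1/p))
    with hΦdef
  have hΦ0 : Tendsto Φ (nhdsWithin 1 (Iio (1:ℝ))) (nhds 0) := by
    have hinner : Tendsto (fun ρ : ℝ => K * (2 * (1 - ρ) ^ ((1/2):ℝ)))
        (nhdsWithin 1 (Iio 1)) (nhds 0) := by
      have hc : ContinuousAt (fun ρ : ℝ => K * (2 * (1 - ρ) ^ ((1/2):ℝ))) 1 := by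
        apply continuousAt_const.mul
        apply continuousAt_const.mul
        exact (Real.continuousAt_rpow_const _ _ (Or.inr (by norm_num))).comp
          (continuousAt_const.sub continuousAt_id)
      have h : Tendsto (fun ρ : ℝ => K * (2 * (1 - ρ) ^ ((1/2):ℝ)))
          (nhdsWithin 1 (Iio 1)) (nhds (K * (2 * ((1:ℝ) - 1) ^ ((1/2):ℝ)))) :=
        hc.continuousWithinAt
      have e : K * (2 * ((1:ℝ) - 1) ^ ((1/2):ℝ)) = 0 := by
        rw [sub_self, Real.zero_rpow (by norm_num : (1/2 : ℝ) ≠ 0)]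
        ring
      rwa [e] at h
    have h2 : Tendsto (fun ρ : ℝ => (K * (2 * (1 - ρ) ^ ((1/2):ℝ))) ^ (1/p))
        (nhdsWithin 1 (Iio 1)) (nhds 0) := by
      have hc0 : ContinuousAt (fun y : ℝ => y ^ ((1/p):ℝ)) 0 :=
        Real.continuousAt_rpow_const 0 (1/p) (Or.inr (by positivity))
      have h := hc0.tendsto.comp hinner
      simp only [Function.comp_def] at h
      rwa [Real.zero_rpow (show (1/p : ℝ) ≠ 0 from (by positivity : (0:ℝ) < 1/p).ne')] at h
    have h := (ENNReal.continuous_ofReal.tendsto 0).comp h2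
    simp only [Function.comp_def, ENNReal.ofReal_zero] at h
    exact h
  have hbound : ∀ᶠ ρ in nhdsWithin (1:ℝ) (Iio 1), (⨆ θ : ℝ,
      (∫⁻ r in Ioc ρ 1, ENNReal.ofReal (‖g (circ r θ)‖ ^ p)) ^ (1/p)) ≤ Φ ρ := by
    filter_upwards [Ioo_mem_nhdsLT_of_mem (show (1:ℝ) ∈ Ioc 0 1 by norm_num)] with ρ hρ
    obtain ⟨hρ0, hρ1⟩ := hρ
    have hinner0 : 0 ≤ K * (2 * (1 - ρ) ^ ((1/2):ℝ)) :=
      mul_nonneg hK0 (mul_nonneg (by norm_num) (Real.rpow_nonneg (by linarith) _))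
    have hΦeq : Φ ρ = (∫⁻ r in Ioc ρ 1, ENNReal.ofReal (K * (1 - r) ^ (-(1/2) : ℝ))) ^ (1/p) := by
      rw [tail_integral hK0 hρ1, hΦdef]
      exact (ENNReal.ofReal_rpow_of_nonneg hinner0 (by positivity : (0:ℝ) ≤ 1/p)).symm
    rw [hΦeq]
    apply iSup_le
    intro θ
    apply ENNReal.rpow_le_rpow _ (by positivity : (0:ℝ) ≤ 1/p)
    rw [← setLIntegral_congr (Ioo_ae_eq_Ioc (a := ρ) (b := (1:ℝ))),
      ← setLIntegral_congr (Ioo_ae_eq_Ioc (a := ρ) (b := (1:ℝ)))]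
    apply setLIntegral_mono' measurableSet_Ioo
    intro r hr
    apply ENNReal.ofReal_le_ofReal
    have hr0 : 0 < r := lt_trans hρ0 hr.1
    exact pow_bound (norm_nonneg (g 0)) hM0 hp hr0 hr.2
      (bloch_growth hg hM hM0 θ hr0.le hr.2) (norm_nonneg _)
  exact tendsto_of_tendsto_of_tendsto_of_le_of_le' tendsto_const_nhds hΦ0
    (Eventually.of_forall fun _ => zero_le) hbound
end

section
/- Given constants B, c > 0 there exists δ ∈ (0,1/2) such that: for every analytic function g on the unit disc 𝔻 satisfying |g'(z)|(1-|z|) ≤ B for all z ∈ 𝔻, for every η ∈ (0,1/2) and every real a satisfying |g'((1-η)e^{ia})|·η > 2c, one has |g'(re^{iθ})| > c/η whenever |r-(1-η)| < δη and |θ-a| < δη. -/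
open Metric Set

/-- Given `B, c > 0` there is `δ ∈ (0,1/2)` such that: for every analytic
`g` on the unit disc with `|g'(z)|(1-|z|) ≤ B` on the disc, every `η ∈ (0,1/2)` and every
real `a` with `|g'((1-η)e^{ia})| η > 2c`, one has `|g'(re^{iθ})| > c/η` whenever
`|r-(1-η)| < δη` and `|θ-a| < δη`. -/
theorem stmt15 (B c : ℝ) (hB : 0 < B) (hc : 0 < c) :
    ∃ δ : ℝ, δ ∈ Ioo (0:ℝ) (1/2) ∧
      ∀ g : ℂ → ℂ, DifferentiableOn ℂ g (ball (0:ℂ) 1) →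
        (∀ z ∈ ball (0:ℂ) 1, ‖deriv g z‖ * (1 - ‖z‖) ≤ B) →
        ∀ η ∈ Ioo (0:ℝ) (1/2), ∀ a : ℝ,
          ‖deriv g (circ (1-η) a)‖ * η > 2*c →
          ∀ r θ : ℝ, |r - (1-η)| < δ*η → |θ - a| < δ*η →
            ‖deriv g (circ r θ)‖ > c/η := by
  have hδ0 : 0 < min (1/4 : ℝ) (c/(32*B)) := lt_min (by norm_num) (by positivity)
  refine ⟨min (1/4) (c/(32*B)), ⟨hδ0, lt_of_le_of_lt (min_le_left _ _) (by norm_num)⟩, ?_⟩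
  set δ := min (1/4 : ℝ) (c/(32*B)) with hδdef
  intro g hg hbound η hη a ha r θ hr hθ
  obtain ⟨hη0, hη2⟩ := hη
  have hδ4 : δ ≤ 1/4 := min_le_left _ _
  have hδc : δ ≤ c/(32*B) := min_le_right _ _
  set z₀ := circ (1-η) a with hz₀def
  set z := circ r θ with hzdef
  have hz₀norm : ‖z₀‖ = 1 - η := by
    rw [hz₀def, circ]
    rw [norm_mul, Complex.norm_real, Real.norm_eq_abs,
      Complex.norm_exp_ofReal_mul_I, mul_one, abs_of_pos (by linarith)]
  -- Lipschitz bound for t ↦ exp (t i)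
  have hexp : ‖Complex.exp (θ*Complex.I) - Complex.exp (a*Complex.I)‖ ≤ |θ - a| := by
    have key := Convex.norm_image_sub_le_of_norm_hasDerivWithin_le
      (f := fun t : ℝ => Complex.exp (t * Complex.I))
      (f' := fun t : ℝ => Complex.exp (t * Complex.I) * Complex.I) (C := 1)
      (s := Set.univ) ?_ ?_ convex_univ (mem_univ a) (mem_univ θ)
    · simpa using key
    · intro t _
      have h1 : HasDerivAt (fun w : ℂ => Complex.exp (w * Complex.I))
          (Complex.exp ((t:ℂ) * Complex.I) * Complex.I) (t:ℂ) := by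
        exact ((Complex.hasDerivAt_exp ((t:ℂ)*Complex.I)).comp (t:ℂ)
          ((hasDerivAt_id ((t:ℂ))).mul_const Complex.I)).congr_deriv (by simp)
      exact h1.comp_ofReal.hasDerivWithinAt
    · intro t _
      simp [Complex.norm_exp_ofReal_mul_I]
  -- distance bound
  have hzz : ‖z - z₀‖ ≤ 2*δ*η := by
    have hsplit : z - z₀ = ((r:ℂ) - ((1-η:ℝ):ℂ)) * Complex.exp (θ*Complex.I)
        + ((1-η:ℝ):ℂ) * (Complex.exp (θ*Complex.I) - Complex.exp (a*Complex.I)) := by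
      rw [hzdef, hz₀def, circ, circ]; ring
    rw [hsplit]
    have h1 : ‖((r:ℂ) - ((1-η:ℝ):ℂ)) * Complex.exp (θ*Complex.I)‖ ≤ δ*η := by
      rw [norm_mul, ← Complex.ofReal_sub,
        Complex.norm_real, Real.norm_eq_abs, Complex.norm_exp_ofReal_mul_I, mul_one]
      exact le_of_lt hr
    have h2 : ‖((1-η:ℝ):ℂ) * (Complex.exp (θ*Complex.I) - Complex.exp (a*Complex.I))‖ ≤ δ*η := by
      rw [norm_mul, Complex.norm_real, Real.norm_eq_abs, abs_of_pos (by linarith)]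
      calc (1-η) * ‖Complex.exp (θ*Complex.I) - Complex.exp (a*Complex.I)‖
          ≤ 1 * |θ - a| := by
            apply mul_le_mul (by linarith) hexp (norm_nonneg _) (by norm_num)
        _ ≤ δ*η := by rw [one_mul]; exact le_of_lt hθ
    calc ‖_ + _‖ ≤ _ + _ := norm_add_le _ _
      _ ≤ δ*η + δ*η := add_le_add h1 h2
      _ = 2*δ*η := by ring
  -- analyticity
  have hA : AnalyticOnNhd ℂ g (ball 0 1) := hg.analyticOnNhd isOpen_ball
  have hA' : AnalyticOnNhd ℂ (deriv g) (ball 0 1) := hA.deriv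
  have hDon : DifferentiableOn ℂ (deriv g) (ball 0 1) :=
    fun u hu => (hA' u hu).differentiableAt.differentiableWithinAt
  -- the small closed ball
  have hwnorm : ∀ w ∈ closedBall z₀ (2*δ*η), ‖w‖ ≤ 1 - η/2 := by
    intro w hw
    rw [mem_closedBall, dist_eq_norm] at hw
    have : ‖w‖ ≤ ‖z₀‖ + 2*δ*η := by
      calc ‖w‖ = ‖z₀ + (w - z₀)‖ := by ring_nf
        _ ≤ ‖z₀‖ + ‖w - z₀‖ := norm_add_le _ _
        _ ≤ ‖z₀‖ + 2*δ*η := by linarith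
    rw [hz₀norm] at this
    nlinarith
  have hSsub : closedBall z₀ (2*δ*η) ⊆ ball (0:ℂ) 1 := by
    intro w hw
    rw [mem_ball, dist_zero_right]
    have := hwnorm w hw
    linarith
  -- second derivative bound via Cauchy estimate
  have hsecond : ∀ w ∈ closedBall z₀ (2*δ*η), ‖deriv (deriv g) w‖ ≤ 16*B/η^2 := by
    intro w hw
    have hR : (0:ℝ) < η/4 := by linarith
    have hsub2 : closedBall w (η/4) ⊆ ball (0:ℂ) 1 := by
      intro u hu
      rw [mem_closedBall, dist_eq_norm] at hu
      rw [mem_ball, dist_zero_right]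
      have h1 : ‖u‖ ≤ ‖w‖ + η/4 := by
        calc ‖u‖ = ‖w + (u - w)‖ := by ring_nf
          _ ≤ ‖w‖ + ‖u - w‖ := norm_add_le _ _
          _ ≤ ‖w‖ + η/4 := by linarith
      have := hwnorm w hw
      linarith
    have hd : DiffContOnCl ℂ (deriv g) (ball w (η/4)) := by
      apply DifferentiableOn.diffContOnCl
      rw [closure_ball w (ne_of_gt hR)]
      exact hDon.mono hsub2
    have hC : ∀ u ∈ sphere w (η/4), ‖deriv g u‖ ≤ 4*B/η := by
      intro u hu
      have hu' : u ∈ closedBall w (η/4) := sphere_subset_closedBall hu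
      have humem : u ∈ ball (0:ℂ) 1 := hsub2 hu'
      have hunorm : ‖u‖ ≤ 1 - η/4 := by
        rw [mem_closedBall, dist_eq_norm] at hu'
        have h1 : ‖u‖ ≤ ‖w‖ + η/4 := by
          calc ‖u‖ = ‖w + (u - w)‖ := by ring_nf
            _ ≤ ‖w‖ + ‖u - w‖ := norm_add_le _ _
            _ ≤ ‖w‖ + η/4 := by linarith
        have := hwnorm w hw
        linarith
      have hb := hbound u humem
      have key : ‖deriv g u‖ * (η/4) ≤ B := by
        calc ‖deriv g u‖ * (η/4) ≤ ‖deriv g u‖ * (1 - ‖u‖) := by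
              apply mul_le_mul_of_nonneg_left (by linarith) (norm_nonneg _)
          _ ≤ B := hb
      rw [le_div_iff₀ (by linarith : (0:ℝ) < η)]
      linarith
    have := Complex.norm_deriv_le_of_forall_mem_sphere_norm_le hR hd hC
    have heq : 4*B/η/(η/4) = 16*B/η^2 := by
      field_simp; ring
    linarith [this, heq.symm ▸ this]
  -- mean value theorem on the closed ball
  have hz₀S : z₀ ∈ closedBall z₀ (2*δ*η) := mem_closedBall_self (by positivity)
  have hzS : z ∈ closedBall z₀ (2*δ*η) := by
    rw [mem_closedBall, dist_eq_norm]; exact hzz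
  have hmvt := Convex.norm_image_sub_le_of_norm_deriv_le (f := deriv g)
    (fun w hw => (hA' w (hSsub hw)).differentiableAt) hsecond
    (convex_closedBall _ _) hz₀S hzS
  -- |deriv g z - deriv g z₀| ≤ 16B/η² · 2δη = 32Bδ/η ≤ c/η
  have hdiff : ‖deriv g z - deriv g z₀‖ ≤ c/η := by
    have h1 : ‖deriv g z - deriv g z₀‖ ≤ 16*B/η^2 * (2*δ*η) := by
      calc ‖deriv g z - deriv g z₀‖ ≤ 16*B/η^2 * ‖z - z₀‖ := hmvt
        _ ≤ 16*B/η^2 * (2*δ*η) := by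
            apply mul_le_mul_of_nonneg_left hzz (by positivity)
    have h2 : 16*B/η^2 * (2*δ*η) = 32*B*δ/η := by
      field_simp; ring
    have hnum : 32*B*δ ≤ c := by
      have := (le_div_iff₀ (by positivity : (0:ℝ) < 32*B)).mp hδc
      linarith
    have h3 : 32*B*δ/η ≤ c/η :=
      div_le_div_of_nonneg_right hnum hη0.le
    calc ‖deriv g z - deriv g z₀‖ ≤ 32*B*δ/η := by rw [← h2]; exact h1
      _ ≤ c/η := h3
  have hz₀big : ‖deriv g z₀‖ > 2*c/η := (div_lt_iff₀ hη0).mpr ha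
  have htri : ‖deriv g z₀‖ - ‖deriv g z‖ ≤ ‖deriv g z - deriv g z₀‖ := by
    have := norm_sub_norm_le (deriv g z₀) (deriv g z)
    rw [norm_sub_rev] at this
    linarith
  have hsplit2 : 2*c/η = c/η + c/η := by ring
  linarith
end
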